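/- arXiv:1903.02115 — 3 statements merged into one kernel-verified Lean document; each statement's English description precedes it below -/
import Mathlib

section
/- Let X be a real Banach space, Δx > 0 a fixed step size, α₁, α₂ nonnegative integers with α₁ + α₂ ≥ 1, x ∈ ℝ, and set a = x − α₂Δx, b = x + α₁Δx. If f : ℝ → X is (α₁+α₂) times continuously differentiable on [a, b], then ‖D₊^{α₁} D₋^{α₂} f(x)‖ ≤ max_{a ≤ y ≤ b} ‖f^{(α₁+α₂)}(y)‖. -/
/-- Forward difference operator with step `h`: `D₊f(x) = (f(x+h) − f(x))/h`. -/
noncomputable def Dplus {X : Type*} [AddCommGroup X] [Module ℝ X] (h : ℝ) (f : ℝ → X) :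
    ℝ → X := fun x => h⁻¹ • (f (x + h) - f x)

/-- Backward difference operator with step `h`: `D₋f(x) = (f(x) − f(x−h))/h`. -/
noncomputable def Dminus {X : Type*} [AddCommGroup X] [Module ℝ X] (h : ℝ) (f : ℝ → X) :
    ℝ → X := fun x => h⁻¹ • (f x - f (x - h))

section Helpers

open Set

variable {X : Type*} [NormedAddCommGroup X] [NormedSpace ℝ X]

lemma DpDm_commute (Δx : ℝ) :
    Function.Commute (Dplus (X := X) Δx) (Dminus Δx) := by
  intro f
  funext x
  simp only [Dplus, Dminus, add_sub_cancel_right, sub_add_cancel, smul_sub]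

lemma iD_subset {f : ℝ → X} {n : ℕ} {s t : Set ℝ}
    (hts : t ⊆ s) (hs : UniqueDiffOn ℝ s) (ht : UniqueDiffOn ℝ t)
    (hf : ContDiffOn ℝ n f s) {y : ℝ} (hy : y ∈ t) :
    iteratedDerivWithin n f t y = iteratedDerivWithin n f s y := by
  have H := (hf.ftaylorSeriesWithin hs).mono hts
  have h2 := H.eq_iteratedFDerivWithin_of_uniqueDiffOn le_rfl ht hy
  simp only [iteratedDerivWithin_eq_iteratedFDerivWithin]
  rw [← h2]
  rfl

lemma iD_shift (c : ℝ) {s : Set ℝ} (hs : UniqueDiffOn ℝ s)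
    (ht : UniqueDiffOn ℝ ((· + c) ⁻¹' s)) {N : ℕ} {f : ℝ → X} (hf : ContDiffOn ℝ N f s) :
    ∀ n ≤ N, ∀ y ∈ (· + c) ⁻¹' s,
      iteratedDerivWithin n (fun z => f (z + c)) ((· + c) ⁻¹' s) y
        = iteratedDerivWithin n f s (y + c) := by
  intro n hn
  induction n with
  | zero => intro y hy; simp
  | succ n IH =>
    intro y hy
    have hy' : y + c ∈ s := hy
    have IH' := IH (Nat.le_of_succ_le hn)
    rw [iteratedDerivWithin_succ,
        iteratedDerivWithin_succ]
    have hF : HasDerivWithinAt (iteratedDerivWithin n f s)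
        (derivWithin (iteratedDerivWithin n f s) s (y + c)) s (y + c) := by
      have hd := (hf.differentiableOn_iteratedDerivWithin
        (by exact_mod_cast Nat.lt_of_succ_le hn) hs) (y + c) hy'
      exact hd.hasDerivWithinAt
    have hinner : HasDerivWithinAt (fun z : ℝ => z + c) 1 ((· + c) ⁻¹' s) y :=
      (hasDerivWithinAt_id y _).add_const c
    have hcomp := hF.scomp y hinner (fun z hz => hz)
    rw [derivWithin_congr (fun z hz => IH' z hz) (IH' y hy)]
    simpa [Function.comp_def] using hcomp.derivWithin (ht.uniqueDiffWithinAt hy)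


lemma iD_Dplus {Δx : ℝ} (hΔx : 0 < Δx) {a b : ℝ} (hab : a ≤ b) {N : ℕ}
    (hN : N = 0 ∨ a < b) {f : ℝ → X}
    (hf : ContDiffOn ℝ N f (Icc a (b + Δx))) {y : ℝ} (hy : y ∈ Icc a b) :
    iteratedDerivWithin N (Dplus Δx f) (Icc a b) y
      = Δx⁻¹ • (iteratedDerivWithin N f (Icc a (b + Δx)) (y + Δx)
          - iteratedDerivWithin N f (Icc a (b + Δx)) y) := by
  have hy1 : a ≤ y := hy.1
  have hy2 : y ≤ b := hy.2
  rcases hN with hN | hab'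
  · subst hN
    simp [Dplus]
  have hab'' : a < b + Δx := by linarith
  have hts : Icc a b ⊆ Icc a (b + Δx) := Icc_subset_Icc le_rfl (by linarith)
  have hs : UniqueDiffOn ℝ (Icc a (b + Δx)) := uniqueDiffOn_Icc hab''
  have ht : UniqueDiffOn ℝ (Icc a b) := uniqueDiffOn_Icc hab'
  have hpre : ((· + Δx) ⁻¹' Icc a (b + Δx)) = Icc (a - Δx) b := by
    ext z
    simp only [mem_preimage, mem_Icc]
    constructor <;> rintro ⟨h1, h2⟩ <;> constructor <;> linarith
  have hpreU : UniqueDiffOn ℝ ((· + Δx) ⁻¹' Icc a (b + Δx)) := by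
    rw [hpre]; exact uniqueDiffOn_Icc (by linarith)
  have hg1 : ContDiffOn ℝ N (fun z => f (z + Δx)) ((· + Δx) ⁻¹' Icc a (b + Δx)) := by
    refine hf.comp ?_ (fun z hz => hz)
    exact (contDiff_id.add contDiff_const).contDiffOn
  have htpre : Icc a b ⊆ (· + Δx) ⁻¹' Icc a (b + Δx) := by
    rw [hpre]; exact Icc_subset_Icc (by linarith) le_rfl
  have hg1t : ContDiffOn ℝ N (fun z => f (z + Δx)) (Icc a b) := hg1.mono htpre
  have hft : ContDiffOn ℝ N f (Icc a b) := hf.mono hts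
  have hsub : ContDiffOn ℝ N ((fun z => f (z + Δx)) - f) (Icc a b) := hg1t.sub hft
  calc iteratedDerivWithin N (Dplus Δx f) (Icc a b) y
      = Δx⁻¹ • iteratedDerivWithin N ((fun z => f (z + Δx)) - f) (Icc a b) y :=
        iteratedDerivWithin_const_smul (f := (fun z => f (z + Δx)) - f) hy ht Δx⁻¹ (hsub y hy)
    _ = Δx⁻¹ • (iteratedDerivWithin N (fun z => f (z + Δx)) (Icc a b) y
          - iteratedDerivWithin N f (Icc a b) y) := by
        exact congrArg (Δx⁻¹ • ·) (iteratedDerivWithin_sub hy ht (hg1t y hy) (hft y hy))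
    _ = Δx⁻¹ • (iteratedDerivWithin N f (Icc a (b + Δx)) (y + Δx)
          - iteratedDerivWithin N f (Icc a (b + Δx)) y) := by
        rw [iD_subset hts hs ht hf hy, iD_subset htpre hpreU ht hg1 hy,
          iD_shift Δx hs hpreU hf N le_rfl y (htpre hy)]

lemma iD_Dminus {Δx : ℝ} (hΔx : 0 < Δx) {a b : ℝ} (hab : a ≤ b) {N : ℕ}
    (hN : N = 0 ∨ a < b) {f : ℝ → X}
    (hf : ContDiffOn ℝ N f (Icc (a - Δx) b)) {y : ℝ} (hy : y ∈ Icc a b) :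
    iteratedDerivWithin N (Dminus Δx f) (Icc a b) y
      = Δx⁻¹ • (iteratedDerivWithin N f (Icc (a - Δx) b) y
          - iteratedDerivWithin N f (Icc (a - Δx) b) (y - Δx)) := by
  have hy1 : a ≤ y := hy.1
  have hy2 : y ≤ b := hy.2
  rcases hN with hN | hab'
  · subst hN
    simp [Dminus]
  have hab'' : a - Δx < b := by linarith
  have hts : Icc a b ⊆ Icc (a - Δx) b := Icc_subset_Icc (by linarith) le_rfl
  have hs : UniqueDiffOn ℝ (Icc (a - Δx) b) := uniqueDiffOn_Icc hab''
  have ht : UniqueDiffOn ℝ (Icc a b) := uniqueDiffOn_Icc hab'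
  have hpre : ((· + -Δx) ⁻¹' Icc (a - Δx) b) = Icc a (b + Δx) := by
    ext z
    simp only [mem_preimage, mem_Icc]
    constructor <;> rintro ⟨h1, h2⟩ <;> constructor <;> linarith
  have hpreU : UniqueDiffOn ℝ ((· + -Δx) ⁻¹' Icc (a - Δx) b) := by
    rw [hpre]; exact uniqueDiffOn_Icc (by linarith)
  have hg1 : ContDiffOn ℝ N (fun z => f (z + -Δx)) ((· + -Δx) ⁻¹' Icc (a - Δx) b) := by
    refine hf.comp ?_ (fun z hz => hz)
    exact (contDiff_id.add contDiff_const).contDiffOn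
  have htpre : Icc a b ⊆ (· + -Δx) ⁻¹' Icc (a - Δx) b := by
    rw [hpre]; exact Icc_subset_Icc le_rfl (by linarith)
  have hg1t : ContDiffOn ℝ N (fun z => f (z + -Δx)) (Icc a b) := hg1.mono htpre
  have hft : ContDiffOn ℝ N f (Icc a b) := hf.mono hts
  have hsub : ContDiffOn ℝ N (f - fun z => f (z + -Δx)) (Icc a b) := hft.sub hg1t
  have e1 : Dminus Δx f = Δx⁻¹ • (f - fun z => f (z + -Δx)) := by
    funext z
    simp [Dminus, sub_eq_add_neg]
  calc iteratedDerivWithin N (Dminus Δx f) (Icc a b) y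
      = Δx⁻¹ • iteratedDerivWithin N (f - fun z => f (z + -Δx)) (Icc a b) y := by
        rw [e1]
        exact iteratedDerivWithin_const_smul (f := f - fun z => f (z + -Δx)) hy ht Δx⁻¹ (hsub y hy)
    _ = Δx⁻¹ • (iteratedDerivWithin N f (Icc a b) y
          - iteratedDerivWithin N (fun z => f (z + -Δx)) (Icc a b) y) := by
        exact congrArg (Δx⁻¹ • ·) (iteratedDerivWithin_sub hy ht (hft y hy) (hg1t y hy))
    _ = Δx⁻¹ • (iteratedDerivWithin N f (Icc (a - Δx) b) y
          - iteratedDerivWithin N f (Icc (a - Δx) b) (y - Δx)) := by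
        rw [iD_subset hts hs ht hf hy, iD_subset htpre hpreU ht hg1 hy,
          iD_shift (-Δx) hs hpreU hf N le_rfl y (htpre hy), ← sub_eq_add_neg]

lemma le_biSup_norm {s : Set ℝ} (hcs : IsCompact s) {G : ℝ → X}
    (hG : ContinuousOn G s) {y : ℝ} (hy : y ∈ s) :
    ‖G y‖ ≤ ⨆ z ∈ s, ‖G z‖ := by
  obtain ⟨z₀, hz₀, hmax⟩ := hcs.exists_isMaxOn ⟨y, hy⟩ hG.norm
  have hmax' : ∀ u ∈ s, ‖G u‖ ≤ ‖G z₀‖ := fun u hu => hmax hu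
  have bdd : BddAbove (Set.range fun z => ⨆ _ : z ∈ s, ‖G z‖) := by
    refine ⟨‖G z₀‖, ?_⟩
    rintro _ ⟨z, rfl⟩
    exact Real.iSup_le (fun h => hmax' z h) (norm_nonneg _)
  calc ‖G y‖ ≤ ‖G z₀‖ := hmax' y hy
    _ ≤ _ := le_ciSup_of_le bdd z₀ (by rw [ciSup_pos hz₀])

lemma step_bound {Δx : ℝ} (hΔx : 0 < Δx) {A B : ℝ} {N : ℕ} {f : ℝ → X} (hAB : A < B)
    (hf : ContDiffOn ℝ (N + 1) f (Icc A B)) {y : ℝ} (hy : y ∈ Icc A B)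
    (hy2 : y + Δx ∈ Icc A B) :
    ‖Δx⁻¹ • (iteratedDerivWithin N f (Icc A B) (y + Δx)
        - iteratedDerivWithin N f (Icc A B) y)‖
      ≤ ⨆ z ∈ Icc A B, ‖iteratedDerivWithin (N + 1) f (Icc A B) z‖ := by
  set s := Icc A B with hsdef
  have hs : UniqueDiffOn ℝ s := uniqueDiffOn_Icc hAB
  set G := iteratedDerivWithin (N + 1) f s with hGdef
  have hGcont : ContinuousOn G s :=
    hf.continuousOn_iteratedDerivWithin le_rfl hs
  set M := ⨆ z ∈ s, ‖G z‖ with hMdef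
  have hle : ∀ u ∈ s, ‖G u‖ ≤ M := fun u hu => le_biSup_norm isCompact_Icc hGcont hu
  have hsub : Icc y (y + Δx) ⊆ s := by
    intro z hz
    exact ⟨le_trans hy.1 hz.1, le_trans hz.2 hy2.2⟩
  have hF : ∀ u ∈ Icc y (y + Δx),
      HasDerivWithinAt (iteratedDerivWithin N f s) (G u) (Icc y (y + Δx)) u := by
    intro u hu
    have hus : u ∈ s := hsub hu
    have hd := (hf.differentiableOn_iteratedDerivWithin
      (by exact_mod_cast Nat.lt_succ_self N) hs) u hus
    have := hd.hasDerivWithinAt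
    rw [← iteratedDerivWithin_succ] at this
    exact this.mono hsub
  have hMVT := Convex.norm_image_sub_le_of_norm_hasDerivWithin_le hF
    (fun u hu => hle u (hsub hu)) (convex_Icc _ _)
    (⟨le_rfl, by linarith⟩ : y ∈ Icc y (y + Δx))
    (⟨by linarith, le_rfl⟩ : y + Δx ∈ Icc y (y + Δx))
  have h1 : ‖(y + Δx) - y‖ = Δx := by
    rw [add_sub_cancel_left, Real.norm_eq_abs, abs_of_pos hΔx]
  rw [norm_smul, Real.norm_eq_abs, abs_of_pos (inv_pos.2 hΔx)]
  calc Δx⁻¹ * ‖iteratedDerivWithin N f s (y + Δx) - iteratedDerivWithin N f s y‖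
      ≤ Δx⁻¹ * (M * Δx) := by
        apply mul_le_mul_of_nonneg_left _ (le_of_lt (inv_pos.2 hΔx))
        calc ‖iteratedDerivWithin N f s (y + Δx) - iteratedDerivWithin N f s y‖
            ≤ M * ‖(y + Δx) - y‖ := hMVT
          _ = M * Δx := by rw [h1]
    _ = M := by field_simp

lemma aux_main (Δx : ℝ) (hΔx : 0 < Δx) :
    ∀ (n p q : ℕ), p + q = n → ∀ (f : ℝ → X) (x : ℝ),
      ContDiffOn ℝ n f (Icc (x - q * Δx) (x + p * Δx)) →
      ‖(Dplus Δx)^[p] ((Dminus Δx)^[q] f) x‖ ≤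
        ⨆ y ∈ Icc (x - q * Δx) (x + p * Δx),
          ‖iteratedDerivWithin n f (Icc (x - q * Δx) (x + p * Δx)) y‖ := by
  intro n
  induction n with
  | zero =>
    intro p q hpq f x hf
    obtain ⟨rfl, rfl⟩ : p = 0 ∧ q = 0 := by omega
    have hx : x ∈ Icc (x - (0 : ℕ) * Δx) (x + (0 : ℕ) * Δx) := by
      constructor <;> simp
    have hGcont : ContinuousOn (iteratedDerivWithin 0 f
        (Icc (x - (0 : ℕ) * Δx) (x + (0 : ℕ) * Δx)))
        (Icc (x - (0 : ℕ) * Δx) (x + (0 : ℕ) * Δx)) := by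
      rw [iteratedDerivWithin_zero]
      exact hf.continuousOn
    have := le_biSup_norm isCompact_Icc hGcont hx
    simpa [iteratedDerivWithin_zero] using this
  | succ n IH =>
    intro p q hpq f x hf
    have hcast : ((p : ℝ) + q) * Δx = ((n : ℝ) + 1) * Δx := by
      have : ((p + q : ℕ) : ℝ) = ((n + 1 : ℕ) : ℝ) := by rw [hpq]
      push_cast at this
      rw [this]
    have hcast' : (p : ℝ) * Δx + q * Δx = ((n : ℝ) + 1) * Δx := by
      rw [← hcast]; ring
    have hn1 : (0 : ℝ) < ((n : ℝ) + 1) * Δx := by positivity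
    have hab : x - q * Δx < x + p * Δx := by linarith
    have hM0 : (0 : ℝ) ≤ ⨆ y ∈ Icc (x - q * Δx) (x + p * Δx),
        ‖iteratedDerivWithin (n + 1) f (Icc (x - q * Δx) (x + p * Δx)) y‖ := by
      have hGcont : ContinuousOn
          (iteratedDerivWithin (n + 1) f (Icc (x - q * Δx) (x + p * Δx)))
          (Icc (x - q * Δx) (x + p * Δx)) :=
        hf.continuousOn_iteratedDerivWithin le_rfl (uniqueDiffOn_Icc hab)
      have hq0 : (0 : ℝ) ≤ q * Δx := by positivity
      have hp0 : (0 : ℝ) ≤ p * Δx := by positivity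
      exact le_trans (norm_nonneg _)
        (le_biSup_norm (y := x) isCompact_Icc hGcont ⟨by linarith, by linarith⟩)
    rcases p with _ | p'
    · -- p = 0, peel a backward difference
      have hq : q = n + 1 := by omega
      subst hq
      have hs_eq : Icc (x - ((n + 1 : ℕ) : ℝ) * Δx) (x + ((0 : ℕ) : ℝ) * Δx)
          = Icc ((x - n * Δx) - Δx) x := by
        congr 1 <;> push_cast <;> ring
      rw [hs_eq] at hf hM0 ⊢
      rw [Function.iterate_zero_apply, Function.iterate_succ_apply]
      set g := Dminus Δx f with hgdef
      have hn0 : (0 : ℝ) ≤ (n : ℝ) * Δx := by positivity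
      have hfn : ContDiffOn ℝ n f (Icc ((x - n * Δx) - Δx) x) :=
        hf.of_le (by exact_mod_cast Nat.le_succ n)
      have hshift : ContDiffOn ℝ n (fun z => f (z - Δx)) (Icc (x - n * Δx) x) := by
        refine hfn.comp ((contDiff_id.sub contDiff_const).contDiffOn) ?_
        intro z hz
        simp only [mem_preimage, mem_Icc] at hz ⊢
        constructor <;> linarith [hz.1, hz.2]
      have hfnt : ContDiffOn ℝ n f (Icc (x - n * Δx) x) :=
        hfn.mono (Icc_subset_Icc (by linarith) le_rfl)
      have hg : ContDiffOn ℝ n g (Icc (x - n * Δx) x) :=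
        (hfnt.sub hshift).const_smul Δx⁻¹
      have hg' : ContDiffOn ℝ n g (Icc (x - (n : ℕ) * Δx) (x + ((0 : ℕ) : ℝ) * Δx)) := by
        simpa using hg
      have h1 := IH 0 n (Nat.zero_add n) g x hg'
      simp only [Nat.cast_zero, zero_mul, add_zero] at h1
      refine h1.trans ?_
      refine Real.iSup_le (fun y => Real.iSup_le (fun hy => ?_) hM0) hM0
      have hkey : iteratedDerivWithin n g (Icc (x - n * Δx) x) y
          = Δx⁻¹ • (iteratedDerivWithin n f (Icc ((x - n * Δx) - Δx) x) y
              - iteratedDerivWithin n f (Icc ((x - n * Δx) - Δx) x) (y - Δx)) := by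
        refine iD_Dminus hΔx (by linarith) ?_ hfn hy
        rcases Nat.eq_zero_or_pos n with h | h
        · exact Or.inl h
        · right
          have : (1 : ℝ) ≤ (n : ℝ) := by exact_mod_cast h
          nlinarith
      rw [hkey]
      have hAB : (x - n * Δx) - Δx < x := by linarith
      have hmem1 : y - Δx ∈ Icc ((x - n * Δx) - Δx) x := by
        exact ⟨by linarith [hy.1], by linarith [hy.2]⟩
      have hmem2 : (y - Δx) + Δx ∈ Icc ((x - n * Δx) - Δx) x := by
        exact ⟨by linarith [hy.1], by linarith [hy.2]⟩
      have hsb := step_bound hΔx hAB hf hmem1 hmem2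
      rw [sub_add_cancel] at hsb
      exact hsb
    · -- p = p' + 1, peel a forward difference
      have hq : p' + q = n := by omega
      have hq0 : (0 : ℝ) ≤ (q : ℝ) * Δx := by positivity
      have hp0 : (0 : ℝ) ≤ (p' : ℝ) * Δx := by positivity
      have hs_eq : Icc (x - (q : ℝ) * Δx) (x + ((p' + 1 : ℕ) : ℝ) * Δx)
          = Icc (x - q * Δx) ((x + p' * Δx) + Δx) := by
        congr 1
        push_cast
        ring
      rw [hs_eq] at hf hM0 ⊢
      rw [Function.iterate_succ_apply, (DpDm_commute Δx).iterate_right q f]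
      set g := Dplus Δx f with hgdef
      have hfn : ContDiffOn ℝ n f (Icc (x - q * Δx) ((x + p' * Δx) + Δx)) :=
        hf.of_le (by exact_mod_cast Nat.le_succ n)
      have hshift : ContDiffOn ℝ n (fun z => f (z + Δx)) (Icc (x - q * Δx) (x + p' * Δx)) := by
        refine hfn.comp ((contDiff_id.add contDiff_const).contDiffOn) ?_
        intro z hz
        simp only [mem_preimage, mem_Icc] at hz ⊢
        constructor <;> linarith [hz.1, hz.2]
      have hfnt : ContDiffOn ℝ n f (Icc (x - q * Δx) (x + p' * Δx)) :=
        hfn.mono (Icc_subset_Icc le_rfl (by linarith))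
      have hg : ContDiffOn ℝ n g (Icc (x - q * Δx) (x + p' * Δx)) :=
        (hshift.sub hfnt).const_smul Δx⁻¹
      have h1 := IH p' q hq g x hg
      refine h1.trans ?_
      refine Real.iSup_le (fun y => Real.iSup_le (fun hy => ?_) hM0) hM0
      have hkey : iteratedDerivWithin n g (Icc (x - q * Δx) (x + p' * Δx)) y
          = Δx⁻¹ • (iteratedDerivWithin n f (Icc (x - q * Δx) ((x + p' * Δx) + Δx)) (y + Δx)
              - iteratedDerivWithin n f (Icc (x - q * Δx) ((x + p' * Δx) + Δx)) y) := by
        refine iD_Dplus hΔx (by linarith) ?_ hfn hy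
        rcases Nat.eq_zero_or_pos n with h | h
        · exact Or.inl h
        · right
          have hsum : (p' : ℝ) * Δx + q * Δx = (n : ℝ) * Δx := by
            have : ((p' + q : ℕ) : ℝ) = (n : ℝ) := by rw [hq]
            push_cast at this
            nlinarith [this]
          have : (1 : ℝ) ≤ (n : ℝ) := by exact_mod_cast h
          nlinarith
      rw [hkey]
      have hAB : x - q * Δx < (x + p' * Δx) + Δx := by linarith
      have hmem1 : y ∈ Icc (x - q * Δx) ((x + p' * Δx) + Δx) := by
        exact ⟨by linarith [hy.1], by linarith [hy.2]⟩
      have hmem2 : y + Δx ∈ Icc (x - q * Δx) ((x + p' * Δx) + Δx) := by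
        exact ⟨by linarith [hy.1], by linarith [hy.2]⟩
      exact step_bound hΔx hAB hf hmem1 hmem2

end Helpers

/-- Proposition 1: if `f` is `(α₁+α₂)` times continuously differentiable on
`[x − α₂Δx, x + α₁Δx]`, then
`‖D₊^{α₁}D₋^{α₂} f(x)‖ ≤ max_{a ≤ y ≤ b} ‖f^{(α₁+α₂)}(y)‖`. -/
theorem norm_Dplus_Dminus_iterate_le {X : Type*} [NormedAddCommGroup X] [NormedSpace ℝ X]
    (f : ℝ → X) (Δx : ℝ) (hΔx : 0 < Δx) (α₁ α₂ : ℕ) (hα : 1 ≤ α₁ + α₂) (x : ℝ)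
    (hf : ContDiffOn ℝ (α₁ + α₂) f (Set.Icc (x - α₂ * Δx) (x + α₁ * Δx))) :
    ‖(Dplus Δx)^[α₁] ((Dminus Δx)^[α₂] f) x‖ ≤
      ⨆ y ∈ Set.Icc (x - α₂ * Δx) (x + α₁ * Δx),
        ‖iteratedDerivWithin (α₁ + α₂) f (Set.Icc (x - α₂ * Δx) (x + α₁ * Δx)) y‖ := by
  exact aux_main Δx hΔx (α₁ + α₂) α₁ α₂ rfl f x hf
end

section
/- Let X be a real Banach space, T > 0, p ≥ 1 an integer, and u ∈ C^{2p+3}([0,T], X) the exact solution of u'(t) = F(t, u(t)), u(0) = u₀, where F : [0,T] × X → X is of class C^{2p+2} and μ-Lipschitz in its second variable. Let (u^{2,n}) be the solution of the modified trapezoidal scheme (u^{2,n+1} − u^{2,n})/k = F(t_{n+1/2}, (u^{2,n+1} + u^{2,n})/2), u^{2,0} = u₀, with k = T/N, t_n = nk, and assume the second-order error bound ‖u^{2,n} − u(t_n)‖ ≤ C₀ k² for all n = 0, …, N, with C₀ independent of k and n. Then there exist k₃ > 0 and a constant C, depending only on p, T, F, C₀ and the derivatives of u (not on k or n), such that for all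 0 < k ≤ k₃, every m = 0, 1, …, p, and every admissible n ≥ m: ‖D(D₊D₋)^m (u^{2,n+1/2} − u(t_{n+1/2}))‖ + ‖(D₊D₋)^m (u^{2,n+1} − u(t_{n+1}))‖ ≤ C k². -/
/-- Forward difference operator with step `k` on grid sequences: `D₊v^n = (v^{n+1} − v^n)/k`.
This is also the centered operator at half indices: `Dv^{n+1/2} = (v^{n+1} − v^n)/k`. -/
noncomputable def sDp {X : Type*} [AddCommGroup X] [Module ℝ X] (k : ℝ) (s : ℕ → X) :
    ℕ → X := fun n => k⁻¹ • (s (n + 1) - s n)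

/-- Backward difference operator with step `k` on grid sequences:
`D₋v^n = (v^n − v^{n−1})/k`. -/
noncomputable def sDm {X : Type*} [AddCommGroup X] [Module ℝ X] (k : ℝ) (s : ℕ → X) :
    ℕ → X := fun n => k⁻¹ • (s n - s (n - 1))

/-- The composite operator `D₊D₋` on grid sequences. -/
noncomputable def sDD {X : Type*} [AddCommGroup X] [Module ℝ X] (k : ℝ) :
    (ℕ → X) → (ℕ → X) := fun s => sDp k (sDm k s)

section SeqTool

variable {Z W : Type*} [NormedAddCommGroup Z] [NormedSpace ℝ Z]
  [NormedAddCommGroup W] [NormedSpace ℝ W]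

theorem sDp_iter_congr (k : ℝ) : ∀ (l : ℕ) (f g : ℕ → Z) (n : ℕ),
    (∀ i, n ≤ i → i ≤ n + l → f i = g i) → (sDp k)^[l] f n = (sDp k)^[l] g n := by
  intro l
  induction l with
  | zero => intro f g n h; simpa using h n le_rfl (by omega)
  | succ l IH =>
    intro f g n h
    rw [Function.iterate_succ_apply, Function.iterate_succ_apply]
    refine IH _ _ n (fun i hi hi2 => ?_)
    simp only [sDp]
    rw [h i (by omega) (by omega), h (i+1) (by omega) (by omega)]

theorem sDp_iter_add (k : ℝ) : ∀ (l : ℕ) (f g : ℕ → Z) (n : ℕ),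
    (sDp k)^[l] (fun i => f i + g i) n = (sDp k)^[l] f n + (sDp k)^[l] g n := by
  intro l
  induction l with
  | zero => intro f g n; rfl
  | succ l IH =>
    intro f g n
    rw [Function.iterate_succ_apply, Function.iterate_succ_apply, Function.iterate_succ_apply]
    rw [show sDp k (fun i => f i + g i) = fun i => sDp k f i + sDp k g i from funext fun i => by
      simp only [sDp]; rw [← smul_add]; congr 1; abel]
    exact IH _ _ n

theorem sDp_iter_smul (k : ℝ) : ∀ (l : ℕ) (c : ℝ) (f : ℕ → Z) (n : ℕ),
    (sDp k)^[l] (fun i => c • f i) n = c • (sDp k)^[l] f n := by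
  intro l
  induction l with
  | zero => intro c f n; rfl
  | succ l IH =>
    intro c f n
    rw [Function.iterate_succ_apply, Function.iterate_succ_apply]
    rw [show sDp k (fun i => c • f i) = fun i => c • sDp k f i from funext fun i => by
      simp only [sDp, smul_sub, smul_comm k⁻¹ c]]
    exact IH _ _ n

theorem sDp_iter_sub (k : ℝ) (l : ℕ) (f g : ℕ → Z) (n : ℕ) :
    (sDp k)^[l] (fun i => f i - g i) n = (sDp k)^[l] f n - (sDp k)^[l] g n := by
  have h : (fun i => f i - g i) = fun i => f i + (-1 : ℝ) • g i := by
    funext i; simp [sub_eq_add_neg]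
  rw [h, sDp_iter_add, sDp_iter_smul]; simp [sub_eq_add_neg]

theorem sDp_iter_shift (k : ℝ) : ∀ (l : ℕ) (f : ℕ → Z) (m n : ℕ),
    (sDp k)^[l] (fun i => f (i + m)) n = (sDp k)^[l] f (n + m) := by
  intro l
  induction l with
  | zero => intro f m n; rfl
  | succ l IH =>
    intro f m n
    rw [Function.iterate_succ_apply, Function.iterate_succ_apply]
    rw [show sDp k (fun i => f (i + m)) = fun i => sDp k f (i + m) from funext fun i => by
      have h3 : i + 1 + m = i + m + 1 := by omega
      simp only [sDp, h3]]
    exact IH _ m n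

theorem sDp_iter_zero_seq (k : ℝ) (l : ℕ) (n : ℕ) :
    (sDp k)^[l] (fun _ : ℕ => (0 : Z)) n = 0 := by
  have := sDp_iter_smul k l 0 (fun _ : ℕ => (0:Z)) n
  simpa using this

theorem sDp_iter_const (k : ℝ) (l : ℕ) (hl : 1 ≤ l) (c : Z) (n : ℕ) :
    (sDp k)^[l] (fun _ : ℕ => c) n = 0 := by
  obtain ⟨l, rfl⟩ : ∃ l', l = l' + 1 := ⟨l - 1, by omega⟩
  rw [Function.iterate_succ_apply]
  rw [show sDp k (fun _ : ℕ => c) = fun _ : ℕ => (0 : Z) from funext fun i => by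
    simp [sDp]]
  exact sDp_iter_zero_seq k l n

theorem sDp_iter_prod (k : ℝ) : ∀ (l : ℕ) (a : ℕ → ℝ) (x : ℕ → Z) (n : ℕ),
    (sDp k)^[l] (fun i => ((a i, x i) : ℝ × Z)) n = ((sDp k)^[l] a n, (sDp k)^[l] x n) := by
  intro l
  induction l with
  | zero => intro a x n; rfl
  | succ l IH =>
    intro a x n
    rw [Function.iterate_succ_apply, Function.iterate_succ_apply, Function.iterate_succ_apply]
    rw [show sDp k (fun i => ((a i, x i) : ℝ × Z)) = fun i => ((sDp k a i, sDp k x i) : ℝ × Z)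
      from funext fun i => by simp [sDp, Prod.smul_mk]]
    exact IH _ _ n

theorem sDp_clm (k : ℝ) (A : ℕ → W →L[ℝ] Z) (x : ℕ → W) :
    sDp k (fun i => A i (x i)) = fun n => A (n+1) (sDp k x n) + (sDp k A n) (x n) := by
  funext n
  simp only [sDp, ContinuousLinearMap.smul_apply, ContinuousLinearMap.sub_apply, map_smul, map_sub]
  rw [← smul_add]
  congr 1
  abel

theorem sProd (k : ℝ) : ∀ (m : ℕ) (A : ℕ → W →L[ℝ] Z) (x : ℕ → W) (P Q : ℝ), 0 ≤ P → 0 ≤ Q →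
    ∀ (b : ℕ), (∀ l ≤ m, ∀ n, n + l ≤ b → ‖(sDp k)^[l] A n‖ ≤ P) →
    (∀ l ≤ m, ∀ n, n + l ≤ b → ‖(sDp k)^[l] x n‖ ≤ Q) →
    ∀ n, n + m ≤ b → ‖(sDp k)^[m] (fun i => A i (x i)) n‖ ≤ 2^m * P * Q := by
  intro m
  induction m with
  | zero =>
    intro A x P Q hP hQ b hA hx n hn
    simpa using le_trans ((A n).le_opNorm (x n))
      (mul_le_mul (hA 0 le_rfl n (by omega)) (hx 0 le_rfl n (by omega)) (norm_nonneg _) hP)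
  | succ m IH =>
    intro A x P Q hP hQ b hA hx n hn
    rw [Function.iterate_succ_apply, sDp_clm]
    rw [show (sDp k)^[m] (fun n => A (n+1) (sDp k x n) + (sDp k A n) (x n)) n
        = (sDp k)^[m] (fun i => A (i+1) (sDp k x i)) n
          + (sDp k)^[m] (fun i => (sDp k A i) (x i)) n from sDp_iter_add k m _ _ n]
    refine le_trans (norm_add_le _ _) ?_
    have h1 : ‖(sDp k)^[m] (fun i => A (i+1) (sDp k x i)) n‖ ≤ 2^m * P * Q := by
      refine IH (fun i => A (i+1)) (sDp k x) P Q hP hQ (b-1) ?_ ?_ n (by omega)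
      · intro l hl n' hn'
        have : (sDp k)^[l] (fun i => A (i+1)) n' = (sDp k)^[l] A (n'+1) := by
          have := sDp_iter_shift k l A 1 n'
          simpa using this
        rw [this]; exact hA l (by omega) (n'+1) (by omega)
      · intro l hl n' hn'
        rw [← Function.iterate_succ_apply]
        exact hx (l+1) (by omega) n' (by omega)
    have h2 : ‖(sDp k)^[m] (fun i => (sDp k A i) (x i)) n‖ ≤ 2^m * P * Q := by
      refine IH (sDp k A) x P Q hP hQ (b-1) ?_ ?_ n (by omega)
      · intro l hl n' hn'
        rw [← Function.iterate_succ_apply]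
        exact hA (l+1) (by omega) n' (by omega)
      · intro l hl n' hn'
        exact hx l (by omega) n' (by omega)
    calc _ ≤ 2^m * P * Q + 2^m * P * Q := add_le_add h1 h2
      _ = 2^(m+1) * P * Q := by ring

theorem sDp_iter_integral (k : ℝ) : ∀ (l : ℕ) (f : ℕ → ℝ → Z),
    (∀ i, IntervalIntegrable (f i) MeasureTheory.volume 0 1) →
    ∀ n, (sDp k)^[l] (fun i => ∫ s in (0:ℝ)..1, f i s) n
      = ∫ s in (0:ℝ)..1, (sDp k)^[l] (fun i => f i s) n := by
  intro l
  induction l with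
  | zero => intro f hf n; rfl
  | succ l IH =>
    intro f hf n
    rw [Function.iterate_succ_apply]
    rw [show sDp k (fun i => ∫ s in (0:ℝ)..1, f i s)
        = fun i => ∫ s in (0:ℝ)..1, k⁻¹ • (f (i+1) s - f i s) from funext fun i => by
      simp only [sDp]
      rw [← intervalIntegral.integral_sub (hf (i+1)) (hf i), intervalIntegral.integral_smul]]
    rw [IH (fun i s => k⁻¹ • (f (i+1) s - f i s))
      (fun i => ((hf (i+1)).sub (hf i)).smul k⁻¹) n]
    have h4 : ∀ s : ℝ, (sDp k)^[l] (fun i => k⁻¹ • (f (i + 1) s - f i s)) n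
        = (sDp k)^[l + 1] (fun i => f i s) n := fun s => by
      rw [Function.iterate_succ_apply]; rfl
    simp only [h4]

end SeqTool

section GridTool

open Set

variable {Z : Type*} [NormedAddCommGroup Z] [NormedSpace ℝ Z]

noncomputable def gridD (k : ℝ) (l : ℕ) (f : ℝ → Z) (t : ℝ) : Z :=
  (sDp k)^[l] (fun i => f (t + i * k)) 0

theorem gridD_zero (k : ℝ) (f : ℝ → Z) (t : ℝ) : gridD k 0 f t = f t := by
  simp [gridD]

theorem gridD_succ (k : ℝ) (l : ℕ) (f : ℝ → Z) (t : ℝ) :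
    gridD k (l+1) f t = k⁻¹ • (gridD k l f (t + k) - gridD k l f t) := by
  have e1 : (fun i : ℕ => f (t + k + (i:ℝ) * k)) = fun i : ℕ => f (t + ((i + 1 : ℕ) : ℝ) * k) := by
    funext i; congr 1; push_cast; ring
  have e2 : gridD k l f (t + k) = (sDp k)^[l] (fun i : ℕ => f (t + (i:ℝ) * k)) 1 := by
    rw [gridD, e1]
    have h := sDp_iter_shift k l (fun i : ℕ => f (t + (i:ℝ) * k)) 1 0
    rw [zero_add] at h
    exact h
  rw [gridD, Function.iterate_succ_apply', e2, gridD]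
  rfl

theorem gridD_seq (k : ℝ) (l : ℕ) (f : ℝ → Z) (t₀ : ℝ) (n : ℕ) :
    (sDp k)^[l] (fun i => f (t₀ + i * k)) n = gridD k l f (t₀ + n * k) := by
  have e1 : (fun i : ℕ => f (t₀ + (n:ℝ) * k + (i:ℝ) * k))
      = fun i : ℕ => f (t₀ + ((i + n : ℕ) : ℝ) * k) := by
    funext i; congr 1; push_cast; ring
  rw [gridD, e1]
  have h := sDp_iter_shift k l (fun i : ℕ => f (t₀ + (i:ℝ) * k)) n 0
  rw [zero_add] at h
  exact h.symm

theorem gridD_hasDeriv (k : ℝ) (hk : 0 < k) (A B : ℝ) :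
    ∀ (l : ℕ) (f f' : ℝ → Z), (∀ x ∈ Icc A B, HasDerivWithinAt f (f' x) (Icc A B) x) →
    ∀ t ∈ Icc A (B - l * k),
      HasDerivWithinAt (fun x => gridD k l f x) (gridD k l f' t) (Icc A (B - l * k)) t := by
  intro l
  induction l with
  | zero =>
    intro f f' hf t ht
    simp only [gridD_zero, Nat.cast_zero, zero_mul, sub_zero] at ht ⊢
    exact hf t ht
  | succ l IH =>
    intro f f' hf t ht
    have hcast : ((l + 1 : ℕ) : ℝ) = (l : ℝ) + 1 := by push_cast; ring
    rw [mem_Icc] at ht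
    rw [hcast] at ht
    have hsub : Icc A (B - (l+1 : ℕ) * k) ⊆ Icc A (B - l * k) := by
      apply Icc_subset_Icc le_rfl
      rw [hcast]; nlinarith [hk.le]
    have ht0 : t ∈ Icc A (B - (l+1:ℕ) * k) := by rw [mem_Icc, hcast]; exact ht
    have ht' : t ∈ Icc A (B - l * k) := hsub ht0
    have htk : t + k ∈ Icc A (B - l * k) := by
      rw [mem_Icc]
      exact ⟨by linarith [hk.le, ht.1], by linarith [ht.2]⟩
    have hshift : HasDerivWithinAt (fun x => gridD k l f (x + k)) (gridD k l f' (t + k))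
        (Icc A (B - (l+1 : ℕ) * k)) t := by
      have hmaps : MapsTo (fun x : ℝ => x + k) (Icc A (B - (l+1:ℕ) * k)) (Icc A (B - l * k)) := by
        intro x hx
        simp only [mem_Icc] at hx ⊢
        rw [hcast] at hx
        exact ⟨by linarith [hk.le], by linarith⟩
      have hinner : HasDerivWithinAt (fun x : ℝ => x + k) 1 (Icc A (B - (l+1:ℕ) * k)) t :=
        (hasDerivWithinAt_id t _).add_const k
      have h5 := (IH f f' hf (t+k) htk).scomp t hinner hmaps
      simpa [Function.comp_def] using h5
    have hbase : HasDerivWithinAt (fun x => gridD k l f x) (gridD k l f' t)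
        (Icc A (B - (l+1 : ℕ) * k)) t := (IH f f' hf t ht').mono hsub
    have hfin := (hshift.sub hbase).const_smul k⁻¹
    have he1 : (fun x => gridD k (l+1) f x)
        = fun x => k⁻¹ • (gridD k l f (x + k) - gridD k l f x) :=
      funext fun x => gridD_succ k l f x
    rw [he1, gridD_succ]
    exact hfin

theorem gridD_norm_le (k : ℝ) (hk : 0 < k) (A B M : ℝ) :
    ∀ (l : ℕ) (f : ℕ → ℝ → Z),
    (∀ r < l, ∀ x ∈ Icc A B, HasDerivWithinAt (f r) (f (r+1) x) (Icc A B) x) →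
    (∀ x ∈ Icc A B, ‖f l x‖ ≤ M) →
    ∀ t₀ ∈ Icc A (B - l * k), ‖gridD k l (f 0) t₀‖ ≤ M := by
  intro l
  induction l with
  | zero =>
    intro f _ hM t₀ ht
    rw [gridD_zero]
    simp only [Nat.cast_zero, zero_mul, sub_zero] at ht
    exact hM t₀ ht
  | succ l IH =>
    intro f hc hM t₀ ht
    have hcast : ((l + 1 : ℕ) : ℝ) = (l : ℝ) + 1 := by push_cast; ring
    rw [mem_Icc, hcast] at ht
    rw [gridD_succ]
    have hD := gridD_hasDeriv k hk A B l (f 0) (f 1) (fun x hx => hc 0 (by omega) x hx)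
    have hDB : ∀ x ∈ Icc A (B - l * k), ‖gridD k l (f 1) x‖ ≤ M := by
      intro x hx
      exact IH (fun r => f (r+1)) (fun r hr => hc (r+1) (by omega)) hM x hx
    have h1 : t₀ ∈ Icc A (B - l * k) := by
      rw [mem_Icc]
      exact ⟨ht.1, by nlinarith [hk.le]⟩
    have h2 : t₀ + k ∈ Icc A (B - l * k) := by
      rw [mem_Icc]
      exact ⟨by linarith [hk.le, ht.1], by linarith [ht.2]⟩
    have hmvt := Convex.norm_image_sub_le_of_norm_hasDerivWithin_le
      (f' := fun x => gridD k l (f 1) x) hD hDB (convex_Icc _ _) h1 h2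
    have hnorm : ‖(t₀ + k) - t₀‖ = k := by
      rw [show (t₀ + k) - t₀ = k by ring]
      exact abs_of_pos hk
    rw [hnorm] at hmvt
    rw [norm_smul]
    have h6 : ‖k⁻¹‖ = k⁻¹ := abs_of_pos (by positivity)
    rw [h6]
    calc k⁻¹ * ‖gridD k l (f 0) (t₀ + k) - gridD k l (f 0) t₀‖ ≤ k⁻¹ * (M * k) := by
          apply mul_le_mul_of_nonneg_left hmvt (by positivity)
      _ = M := by field_simp

end GridTool

section TaylorTool

open Set

variable {Z : Type*} [NormedAddCommGroup Z] [NormedSpace ℝ Z]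

theorem seg_norm_le {a x y : ℝ} (hy : y ∈ segment ℝ a x) : ‖y - a‖ ≤ ‖x - a‖ := by
  obtain ⟨α, β, hα, hβ, hαβ, rfl⟩ := hy
  have h1 : α • a + β • x - a = β • (x - a) := by
    have : α = 1 - β := by linarith
    subst this
    simp only [smul_eq_mul, smul_sub]
    ring_nf
  rw [h1, norm_smul]
  have : ‖β‖ ≤ 1 := by rw [Real.norm_eq_abs, abs_of_nonneg hβ]; linarith
  calc ‖β‖ * ‖x - a‖ ≤ 1 * ‖x - a‖ := mul_le_mul_of_nonneg_right this (norm_nonneg _)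
    _ = ‖x - a‖ := one_mul _

theorem taylor1 (s : Set ℝ) (hs : Convex ℝ s) (h₀ h₁ h₂ : ℝ → Z)
    (hd0 : ∀ y ∈ s, HasDerivWithinAt h₀ (h₁ y) s y)
    (hd1 : ∀ y ∈ s, HasDerivWithinAt h₁ (h₂ y) s y)
    (M : ℝ) (hM : ∀ y ∈ s, ‖h₂ y‖ ≤ M) (a x : ℝ) (ha : a ∈ s) (hx : x ∈ s) :
    ‖h₀ x - h₀ a - (x - a) • h₁ a‖ ≤ M * ‖x - a‖^2 := by
  have hseg : segment ℝ a x ⊆ s := hs.segment_subset ha hx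
  have hφ : ∀ y ∈ segment ℝ a x,
      HasDerivWithinAt (fun y => h₀ y - y • h₁ a) (h₁ y - h₁ a) (segment ℝ a x) y := by
    intro y hy
    have h1 := (hd0 y (hseg hy)).mono hseg
    have h2 : HasDerivWithinAt (fun y : ℝ => y • h₁ a) ((1:ℝ) • h₁ a) (segment ℝ a x) y :=
      (hasDerivWithinAt_id y _).smul_const (h₁ a)
    simpa using h1.fun_sub h2
  have hbound : ∀ y ∈ segment ℝ a x, ‖h₁ y - h₁ a‖ ≤ M * ‖x - a‖ := by
    intro y hy
    have := Convex.norm_image_sub_le_of_norm_hasDerivWithin_le hd1 hM hs ha (hseg hy)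
    calc ‖h₁ y - h₁ a‖ ≤ M * ‖y - a‖ := this
      _ ≤ M * ‖x - a‖ := by
          apply mul_le_mul_of_nonneg_left (seg_norm_le hy)
          exact le_trans (norm_nonneg _) (hM a ha)
  have hmvt := Convex.norm_image_sub_le_of_norm_hasDerivWithin_le hφ hbound
    (convex_segment a x) (left_mem_segment ℝ a x) (right_mem_segment ℝ a x)
  have hkey : h₀ x - h₀ a - (x - a) • h₁ a
      = (h₀ x - x • h₁ a) - (h₀ a - a • h₁ a) := by module
  rw [hkey]
  calc ‖(h₀ x - x • h₁ a) - (h₀ a - a • h₁ a)‖ ≤ M * ‖x - a‖ * ‖x - a‖ := hmvt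
    _ = M * ‖x - a‖^2 := by ring

theorem taylor2 (s : Set ℝ) (hs : Convex ℝ s) (h₀ h₁ h₂ h₃ : ℝ → Z)
    (hd0 : ∀ y ∈ s, HasDerivWithinAt h₀ (h₁ y) s y)
    (hd1 : ∀ y ∈ s, HasDerivWithinAt h₁ (h₂ y) s y)
    (hd2 : ∀ y ∈ s, HasDerivWithinAt h₂ (h₃ y) s y)
    (M : ℝ) (hM : ∀ y ∈ s, ‖h₃ y‖ ≤ M) (a x : ℝ) (ha : a ∈ s) (hx : x ∈ s) :
    ‖h₀ x - h₀ a - (x - a) • h₁ a - (2⁻¹ * (x - a)^2) • h₂ a‖ ≤ M * ‖x - a‖^3 := by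
  have hseg : segment ℝ a x ⊆ s := hs.segment_subset ha hx
  have hM0 : 0 ≤ M := le_trans (norm_nonneg _) (hM a ha)
  have hφ : ∀ y ∈ segment ℝ a x,
      HasDerivWithinAt (fun y => h₀ y - y • h₁ a - (2⁻¹ * (y - a)^2) • h₂ a)
        (h₁ y - h₁ a - (y - a) • h₂ a) (segment ℝ a x) y := by
    intro y hy
    have h1 := (hd0 y (hseg hy)).mono hseg
    have h2 : HasDerivWithinAt (fun y : ℝ => y • h₁ a) ((1:ℝ) • h₁ a) (segment ℝ a x) y :=
      (hasDerivWithinAt_id y _).smul_const (h₁ a)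
    have h3 : HasDerivWithinAt (fun y : ℝ => 2⁻¹ * (y - a)^2) (y - a) (segment ℝ a x) y := by
      have hid : HasDerivWithinAt (fun y : ℝ => y - a) 1 (segment ℝ a x) y :=
        (hasDerivWithinAt_id y _).sub_const a
      have hpow := hid.fun_pow 2
      have h3' := hpow.const_mul (2⁻¹ : ℝ)
      exact h3'.congr_deriv (by push_cast; ring)
    have h4 := h3.smul_const (h₂ a)
    have := (h1.fun_sub h2).fun_sub h4
    convert this using 1
    module
  have hbound : ∀ y ∈ segment ℝ a x,
      ‖h₁ y - h₁ a - (y - a) • h₂ a‖ ≤ M * ‖x - a‖^2 := by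
    intro y hy
    calc ‖h₁ y - h₁ a - (y - a) • h₂ a‖ ≤ M * ‖y - a‖^2 :=
          taylor1 s hs h₁ h₂ h₃ hd1 hd2 M hM a y ha (hseg hy)
      _ ≤ M * ‖x - a‖^2 := by
          apply mul_le_mul_of_nonneg_left _ hM0
          exact pow_le_pow_left₀ (norm_nonneg _) (seg_norm_le hy) 2
  have hmvt := Convex.norm_image_sub_le_of_norm_hasDerivWithin_le hφ hbound
    (convex_segment a x) (left_mem_segment ℝ a x) (right_mem_segment ℝ a x)
  have hkey : h₀ x - h₀ a - (x - a) • h₁ a - (2⁻¹ * (x - a)^2) • h₂ a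
      = (h₀ x - x • h₁ a - (2⁻¹ * (x - a)^2) • h₂ a)
        - (h₀ a - a • h₁ a - (2⁻¹ * (a - a)^2) • h₂ a) := by
    have hz : (2⁻¹ * (a - a)^2 : ℝ) = 0 := by ring
    rw [hz, zero_smul, sub_zero]
    module
  rw [hkey]
  calc _ ≤ M * ‖x - a‖^2 * ‖x - a‖ := hmvt
    _ = M * ‖x - a‖^3 := by ring

theorem mid_est (s : Set ℝ) (hs : Convex ℝ s) (w₀ w₁ w₂ w₃ : ℝ → Z)
    (hd0 : ∀ y ∈ s, HasDerivWithinAt w₀ (w₁ y) s y)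
    (hd1 : ∀ y ∈ s, HasDerivWithinAt w₁ (w₂ y) s y)
    (hd2 : ∀ y ∈ s, HasDerivWithinAt w₂ (w₃ y) s y)
    (M : ℝ) (hM : ∀ y ∈ s, ‖w₃ y‖ ≤ M) (t k : ℝ) (hk : 0 < k)
    (ht : t ∈ s) (htk : t + k ∈ s) :
    ‖w₁ (t + k/2) - k⁻¹ • (w₀ (t + k) - w₀ t)‖ ≤ 2 * M * k^2 := by
  have hM0 : 0 ≤ M := le_trans (norm_nonneg _) (hM t ht)
  have hm : t + k/2 ∈ s := by
    have := hs.add_smul_sub_mem ht htk (t := (2⁻¹ : ℝ)) (by constructor <;> norm_num)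
    have he : t + (2⁻¹ : ℝ) • ((t + k) - t) = t + k/2 := by
      simp only [smul_eq_mul]; ring
    rwa [he] at this
  have hnk : ‖(t + k) - t‖ = k := by
    rw [show (t + k) - t = k by ring]; exact abs_of_pos hk
  have hnk2 : ‖(t + k/2) - t‖ = k/2 := by
    rw [show (t + k/2) - t = k/2 by ring]; exact abs_of_pos (by linarith)
  have hR1 := taylor2 s hs w₀ w₁ w₂ w₃ hd0 hd1 hd2 M hM t (t + k) ht htk
  rw [hnk] at hR1
  have hR2 := taylor1 s hs w₁ w₂ w₃ hd1 hd2 M hM t (t + k/2) ht hm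
  rw [hnk2] at hR2
  set R1 := w₀ (t + k) - w₀ t - ((t + k) - t) • w₁ t - (2⁻¹ * ((t + k) - t)^2) • w₂ t with hR1def
  set R2 := w₁ (t + k/2) - w₁ t - ((t + k/2) - t) • w₂ t with hR2def
  have hE : w₀ (t + k) - w₀ t - k • w₁ (t + k/2) = R1 - k • R2 := by
    rw [hR1def, hR2def]; module
  have hEbound : ‖w₀ (t + k) - w₀ t - k • w₁ (t + k/2)‖ ≤ 2 * M * k^3 := by
    rw [hE]
    calc ‖R1 - k • R2‖ ≤ ‖R1‖ + ‖k • R2‖ := norm_sub_le _ _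
      _ ≤ M * k^3 + k * (M * (k/2)^2) := by
          apply add_le_add hR1
          rw [norm_smul, Real.norm_eq_abs, abs_of_pos hk]
          exact mul_le_mul_of_nonneg_left hR2 hk.le
      _ ≤ 2 * M * k^3 := by nlinarith [mul_nonneg hM0 (pow_pos hk 3).le]
  have hX : k • (w₁ (t + k/2) - k⁻¹ • (w₀ (t + k) - w₀ t))
      = -(w₀ (t + k) - w₀ t - k • w₁ (t + k/2)) := by
    rw [smul_sub, smul_smul, mul_inv_cancel₀ hk.ne', one_smul]
    module
  have h8 := congrArg norm hX
  rw [norm_neg, norm_smul, Real.norm_eq_abs, abs_of_pos hk] at h8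
  have hnX : ‖w₁ (t + k/2) - k⁻¹ • (w₀ (t + k) - w₀ t)‖
      = k⁻¹ * ‖w₀ (t + k) - w₀ t - k • w₁ (t + k/2)‖ := by
    rw [← h8]
    field_simp
  rw [hnX]
  calc k⁻¹ * ‖w₀ (t + k) - w₀ t - k • w₁ (t + k/2)‖ ≤ k⁻¹ * (2 * M * k^3) := by
        apply mul_le_mul_of_nonneg_left hEbound (by positivity)
    _ = 2 * M * k^2 := by field_simp

theorem avg_est (s : Set ℝ) (hs : Convex ℝ s) (w₀ w₁ w₂ : ℝ → Z)
    (hd0 : ∀ y ∈ s, HasDerivWithinAt w₀ (w₁ y) s y)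
    (hd1 : ∀ y ∈ s, HasDerivWithinAt w₁ (w₂ y) s y)
    (M : ℝ) (hM : ∀ y ∈ s, ‖w₂ y‖ ≤ M) (t k : ℝ) (hk : 0 < k)
    (ht : t ∈ s) (htk : t + k ∈ s) :
    ‖(2⁻¹:ℝ) • (w₀ t + w₀ (t + k)) - w₀ (t + k/2)‖ ≤ M * k^2 := by
  have hM0 : 0 ≤ M := le_trans (norm_nonneg _) (hM t ht)
  have hm : t + k/2 ∈ s := by
    have := hs.add_smul_sub_mem ht htk (t := (2⁻¹ : ℝ)) (by constructor <;> norm_num)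
    have he : t + (2⁻¹ : ℝ) • ((t + k) - t) = t + k/2 := by
      simp only [smul_eq_mul]; ring
    rwa [he] at this
  have hnk : ‖(t + k) - t‖ = k := by
    rw [show (t + k) - t = k by ring]; exact abs_of_pos hk
  have hnk2 : ‖(t + k/2) - t‖ = k/2 := by
    rw [show (t + k/2) - t = k/2 by ring]; exact abs_of_pos (by linarith)
  have hR1 := taylor1 s hs w₀ w₁ w₂ hd0 hd1 M hM t (t + k) ht htk
  rw [hnk] at hR1
  have hR2 := taylor1 s hs w₀ w₁ w₂ hd0 hd1 M hM t (t + k/2) ht hm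
  rw [hnk2] at hR2
  have hE : (2⁻¹:ℝ) • (w₀ t + w₀ (t + k)) - w₀ (t + k/2)
      = (2⁻¹:ℝ) • (w₀ (t + k) - w₀ t - ((t + k) - t) • w₁ t)
        - (w₀ (t + k/2) - w₀ t - ((t + k/2) - t) • w₁ t) := by module
  rw [hE]
  calc _ ≤ ‖(2⁻¹:ℝ) • (w₀ (t + k) - w₀ t - ((t + k) - t) • w₁ t)‖
        + ‖w₀ (t + k/2) - w₀ t - ((t + k/2) - t) • w₁ t‖ := norm_sub_le _ _
    _ ≤ 2⁻¹ * (M * k^2) + M * (k/2)^2 := by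
        apply add_le_add _ hR2
        rw [norm_smul]
        simp only [Real.norm_eq_abs]
        rw [abs_of_pos (by norm_num : (0:ℝ) < 2⁻¹)]
        exact mul_le_mul_of_nonneg_left hR1 (by norm_num)
    _ ≤ M * k^2 := by nlinarith

end TaylorTool

section ChainTool

open Set intervalIntegral

theorem ftc_seg {W Z : Type} [NormedAddCommGroup W] [NormedSpace ℝ W]
    [NormedAddCommGroup Z] [NormedSpace ℝ Z] [CompleteSpace Z]
    (g : W → Z) (hgd : Differentiable ℝ g) (hgc : Continuous (fderiv ℝ g)) (a b : W) :
    g b - g a = ∫ s in (0:ℝ)..1, fderiv ℝ g (a + s • (b - a)) (b - a) := by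
  have hpath : ∀ s : ℝ, HasDerivAt (fun t : ℝ => a + t • (b - a)) (b - a) s := by
    intro s
    simpa using ((hasDerivAt_id s).smul_const (b - a)).const_add a
  have hderiv : ∀ s ∈ Set.uIcc (0:ℝ) 1,
      HasDerivAt (fun t : ℝ => g (a + t • (b - a)))
        (fderiv ℝ g (a + s • (b - a)) (b - a)) s := by
    intro s _
    exact (hgd (a + s • (b - a))).hasFDerivAt.comp_hasDerivAt s (hpath s)
  have hint : IntervalIntegrable (fun s : ℝ => fderiv ℝ g (a + s • (b - a)) (b - a))
      MeasureTheory.volume 0 1 := by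
    apply Continuous.intervalIntegrable
    exact (hgc.comp (continuous_const.add (continuous_id.smul continuous_const))).clm_apply
      continuous_const
  have := intervalIntegral.integral_eq_sub_of_hasDerivAt hderiv hint
  rw [this]
  norm_num

theorem sChain (k : ℝ) :
    ∀ (j : ℕ) {W Z : Type} [NormedAddCommGroup W] [NormedSpace ℝ W]
      [NormedAddCommGroup Z] [NormedSpace ℝ Z] [CompleteSpace Z]
      (g : W → Z), ContDiff ℝ j g → ∀ (S : Set W), Convex ℝ S → ∀ (M Q : ℝ),
      1 ≤ M → 1 ≤ Q →
      (∀ l ≤ j, ∀ w ∈ S, ‖iteratedFDeriv ℝ l g w‖ ≤ M) →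
      ∀ (y : ℕ → W) (b : ℕ), (∀ n ≤ b, y n ∈ S) →
      (∀ l, 1 ≤ l → l ≤ j → ∀ n, n + l ≤ b → ‖(sDp k)^[l] y n‖ ≤ Q) →
      ∀ l ≤ j, ∀ n, n + l ≤ b →
        ‖(sDp k)^[l] (fun i => g (y i)) n‖ ≤ 2 ^ (j * j) * M * Q ^ j := by
  intro j
  induction j with
  | zero =>
    intro W Z _ _ _ _ _ g hg S hS M Q hM hQ hgb y b hyS hyd l hl n hn
    interval_cases l
    have h0 : ‖g (y n)‖ ≤ M := by
      have := hgb 0 le_rfl (y n) (hyS n (by omega))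
      rwa [norm_iteratedFDeriv_zero] at this
    simpa using h0
  | succ j IH =>
    intro W Z _ _ _ _ _ g hg S hS M Q hM hQ hgb y b hyS hyd l hl n hn
    have hM0 : (0:ℝ) ≤ M := by linarith
    have hQ0 : (0:ℝ) ≤ Q := by linarith
    have hmono : (2:ℝ) ^ (j * j) * M * Q ^ j ≤ 2 ^ ((j+1) * (j+1)) * M * Q ^ (j+1) := by
      have h1 : (2:ℝ) ^ (j * j) ≤ 2 ^ ((j+1)*(j+1)) :=
        pow_le_pow_right₀ one_le_two (by nlinarith)
      have h2 : Q ^ j ≤ Q ^ (j+1) := pow_le_pow_right₀ hQ (by omega)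
      have h3 : (0:ℝ) ≤ Q ^ j := pow_nonneg hQ0 j
      calc (2:ℝ) ^ (j * j) * M * Q ^ j ≤ 2 ^ ((j+1)*(j+1)) * M * Q ^ j :=
            mul_le_mul_of_nonneg_right (mul_le_mul_of_nonneg_right h1 hM0) h3
        _ ≤ 2 ^ ((j+1)*(j+1)) * M * Q ^ (j+1) :=
            mul_le_mul_of_nonneg_left h2 (by positivity)
    rcases Nat.lt_or_ge l (j+1) with hlt | hge
    · -- l ≤ j : use IH on g directly
      have := IH g (hg.of_le (by exact_mod_cast Nat.le_succ j)) S hS M Q hM hQ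
        (fun l' hl' => hgb l' (by omega)) y b hyS
        (fun l' h1 h2 => hyd l' h1 (by omega)) l (by omega) n hn
      exact le_trans this hmono
    · have hl' : l = j + 1 := by omega
      subst hl'
      have hb1 : 1 ≤ b := by omega
      have hgd : Differentiable ℝ g :=
        hg.differentiable (by simp)
      have hgc : Continuous (fderiv ℝ g) :=
        hg.continuous_fderiv (by simp)
      -- step A: identity
      have hid : sDp k (fun i => g (y i)) = fun i => ∫ s in (0:ℝ)..1,
          (fderiv ℝ g (y i + s • (y (i+1) - y i))) (k⁻¹ • (y (i+1) - y i)) := by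
        funext i
        have h1 := ftc_seg g hgd hgc (y i) (y (i+1))
        simp only [sDp]
        rw [h1, ← intervalIntegral.integral_smul]
        congr 1
        funext s
        rw [← ContinuousLinearMap.map_smul]
      rw [Function.iterate_succ_apply, hid]
      have hint : ∀ i, IntervalIntegrable
          (fun s : ℝ => (fderiv ℝ g (y i + s • (y (i+1) - y i))) (k⁻¹ • (y (i+1) - y i)))
          MeasureTheory.volume 0 1 := by
        intro i
        apply Continuous.intervalIntegrable
        exact (hgc.comp (continuous_const.add (continuous_id.smul continuous_const))).clm_apply
          continuous_const
      rw [sDp_iter_integral k j _ hint n]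
      have hker : ∀ s ∈ Set.Ioc (0:ℝ) 1,
          ‖(sDp k)^[j] (fun i => (fderiv ℝ g (y i + s • (y (i+1) - y i)))
            (k⁻¹ • (y (i+1) - y i))) n‖ ≤ 2^j * (2 ^ (j*j) * M * Q ^ j) * Q := by
        intro s hs
        have hs0 : (0:ℝ) ≤ s := hs.1.le
        have hs1 : s ≤ 1 := hs.2
        -- bound via sProd
        have hyd1 : ∀ l ≤ j, ∀ n', n' + l ≤ b - 1 →
            ‖(sDp k)^[l] (fun i => k⁻¹ • (y (i+1) - y i)) n'‖ ≤ Q := by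
          intro l hl n' hn'
          have he : (fun i => k⁻¹ • (y (i+1) - y i)) = sDp k y := rfl
          rw [he, ← Function.iterate_succ_apply]
          exact hyd (l+1) (by omega) (by omega) n' (by omega)
        have hAd : ∀ l ≤ j, ∀ n', n' + l ≤ b - 1 →
            ‖(sDp k)^[l] (fun i => fderiv ℝ g (y i + s • (y (i+1) - y i))) n'‖
              ≤ 2 ^ (j*j) * M * Q ^ j := by
          have hg' : ContDiff ℝ j (fderiv ℝ g) := hg.fderiv_right (by exact_mod_cast le_rfl)
          have hgb' : ∀ l ≤ j, ∀ w ∈ S, ‖iteratedFDeriv ℝ l (fderiv ℝ g) w‖ ≤ M := by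
            intro l hl w hw
            rw [norm_iteratedFDeriv_fderiv]
            exact hgb (l+1) (by omega) w hw
          have hzS : ∀ n' ≤ b - 1, y n' + s • (y (n'+1) - y n') ∈ S := by
            intro n' hn'
            exact hS.add_smul_sub_mem (hyS n' (by omega)) (hyS (n'+1) (by omega)) ⟨hs0, hs1⟩
          have hzd : ∀ l, 1 ≤ l → l ≤ j → ∀ n', n' + l ≤ b - 1 →
              ‖(sDp k)^[l] (fun i => y i + s • (y (i+1) - y i)) n'‖ ≤ Q := by
            intro l h1l hlj n' hn'
            have he : (sDp k)^[l] (fun i => y i + s • (y (i+1) - y i)) n'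
                = (sDp k)^[l] y n' + s • ((sDp k)^[l] y (n'+1) - (sDp k)^[l] y n') := by
              rw [show (fun i => y i + s • (y (i+1) - y i))
                  = (fun i => y i + s • ((fun i' => y (i'+1)) i - y i)) from rfl]
              rw [sDp_iter_add]
              congr 1
              rw [sDp_iter_smul]
              congr 1
              rw [sDp_iter_sub]
              congr 2
              have := sDp_iter_shift k l y 1 n'
              simpa using this
            rw [he]
            have hcomb : (sDp k)^[l] y n' + s • ((sDp k)^[l] y (n'+1) - (sDp k)^[l] y n')
                = (1 - s) • (sDp k)^[l] y n' + s • (sDp k)^[l] y (n'+1) := by module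
            rw [hcomb]
            calc ‖(1 - s) • (sDp k)^[l] y n' + s • (sDp k)^[l] y (n'+1)‖
                ≤ ‖(1 - s) • (sDp k)^[l] y n'‖ + ‖s • (sDp k)^[l] y (n'+1)‖ := norm_add_le _ _
              _ ≤ (1 - s) * Q + s * Q := by
                  apply add_le_add
                  · rw [norm_smul, Real.norm_eq_abs, abs_of_nonneg (by linarith)]
                    exact mul_le_mul_of_nonneg_left
                      (hyd l h1l (by omega) n' (by omega)) (by linarith)
                  · rw [norm_smul, Real.norm_eq_abs, abs_of_nonneg hs0]
                    exact mul_le_mul_of_nonneg_left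
                      (hyd l h1l (by omega) (n'+1) (by omega)) hs0
              _ = Q := by ring
          exact IH (fderiv ℝ g) hg' S hS M Q hM hQ hgb'
            (fun i => y i + s • (y (i+1) - y i)) (b-1) hzS hzd
        exact sProd k j _ _ (2 ^ (j*j) * M * Q ^ j) Q (by positivity) hQ0 (b-1)
          hAd hyd1 n (by omega)
      have := intervalIntegral.norm_integral_le_of_norm_le_const (C := 2^j * (2 ^ (j*j) * M * Q ^ j) * Q)
        (fun s hs => hker s (by rwa [Set.uIoc_of_le zero_le_one] at hs))
      rw [show |(1:ℝ) - 0| = 1 by norm_num, mul_one] at this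
      refine le_trans this ?_
      have : (2:ℝ)^j * (2 ^ (j*j) * M * Q ^ j) * Q = 2^(j + j*j) * M * Q^(j+1) := by
        rw [pow_add, pow_succ]
        ring
      rw [this]
      have h1 : (2:ℝ) ^ (j + j * j) ≤ 2 ^ ((j+1)*(j+1)) :=
        pow_le_pow_right₀ one_le_two (by nlinarith)
      have h3 : (0:ℝ) ≤ Q ^ (j+1) := pow_nonneg hQ0 _
      exact mul_le_mul_of_nonneg_right (mul_le_mul_of_nonneg_right h1 hM0) h3

end ChainTool

section DiffChainTool

open Set

theorem sDiffChain (k : ℝ) (j : ℕ) {W Z : Type} [NormedAddCommGroup W] [NormedSpace ℝ W]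
    [NormedAddCommGroup Z] [NormedSpace ℝ Z] [CompleteSpace Z]
    (g : W → Z) (hg : ContDiff ℝ (j+1 : ℕ) g) (S : Set W) (hS : Convex ℝ S)
    (M Q ε : ℝ) (hM : 1 ≤ M) (hQ : 1 ≤ Q) (hε : 0 ≤ ε)
    (hgb : ∀ l ≤ j + 1, ∀ w ∈ S, ‖iteratedFDeriv ℝ l g w‖ ≤ M)
    (x y : ℕ → W) (b : ℕ) (hxS : ∀ n ≤ b, x n ∈ S) (hyS : ∀ n ≤ b, y n ∈ S)
    (hxd : ∀ l, 1 ≤ l → l ≤ j → ∀ n, n + l ≤ b → ‖(sDp k)^[l] x n‖ ≤ Q)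
    (hyd : ∀ l, 1 ≤ l → l ≤ j → ∀ n, n + l ≤ b → ‖(sDp k)^[l] y n‖ ≤ Q)
    (hσ : ∀ l ≤ j, ∀ n, n + l ≤ b → ‖(sDp k)^[l] (fun i => x i - y i) n‖ ≤ ε) :
    ∀ n, n + j ≤ b →
      ‖(sDp k)^[j] (fun i => g (x i) - g (y i)) n‖ ≤ 2^j * (2 ^ (j*j) * M * Q ^ j) * ε := by
  intro n hn
  have hgd : Differentiable ℝ g :=
    hg.differentiable (by simp)
  have hgc : Continuous (fderiv ℝ g) :=
    hg.continuous_fderiv (by simp)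
  have hid : (fun i => g (x i) - g (y i)) = fun i => ∫ s in (0:ℝ)..1,
      (fderiv ℝ g (y i + s • (x i - y i))) (x i - y i) := by
    funext i
    exact ftc_seg g hgd hgc (y i) (x i)
  rw [hid]
  have hint : ∀ i, IntervalIntegrable
      (fun s : ℝ => (fderiv ℝ g (y i + s • (x i - y i))) (x i - y i))
      MeasureTheory.volume 0 1 := by
    intro i
    apply Continuous.intervalIntegrable
    exact (hgc.comp (continuous_const.add (continuous_id.smul continuous_const))).clm_apply
      continuous_const
  rw [sDp_iter_integral k j _ hint n]
  have hker : ∀ s ∈ Set.Ioc (0:ℝ) 1,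
      ‖(sDp k)^[j] (fun i => (fderiv ℝ g (y i + s • (x i - y i))) (x i - y i)) n‖
        ≤ 2^j * (2 ^ (j*j) * M * Q ^ j) * ε := by
    intro s hs
    have hs0 : (0:ℝ) ≤ s := hs.1.le
    have hs1 : s ≤ 1 := hs.2
    have hAd : ∀ l ≤ j, ∀ n', n' + l ≤ b →
        ‖(sDp k)^[l] (fun i => fderiv ℝ g (y i + s • (x i - y i))) n'‖
          ≤ 2 ^ (j*j) * M * Q ^ j := by
      have hg' : ContDiff ℝ j (fderiv ℝ g) := hg.fderiv_right (by exact_mod_cast le_rfl)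
      have hgb' : ∀ l ≤ j, ∀ w ∈ S, ‖iteratedFDeriv ℝ l (fderiv ℝ g) w‖ ≤ M := by
        intro l hl w hw
        rw [norm_iteratedFDeriv_fderiv]
        exact hgb (l+1) (by omega) w hw
      have hzS : ∀ n' ≤ b, y n' + s • (x n' - y n') ∈ S := by
        intro n' hn'
        exact hS.add_smul_sub_mem (hyS n' hn') (hxS n' hn') ⟨hs0, hs1⟩
      have hzd : ∀ l, 1 ≤ l → l ≤ j → ∀ n', n' + l ≤ b →
          ‖(sDp k)^[l] (fun i => y i + s • (x i - y i)) n'‖ ≤ Q := by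
        intro l h1l hlj n' hn'
        have he : (sDp k)^[l] (fun i => y i + s • (x i - y i)) n'
            = (sDp k)^[l] y n' + s • ((sDp k)^[l] x n' - (sDp k)^[l] y n') := by
          rw [sDp_iter_add]
          congr 1
          rw [sDp_iter_smul]
          congr 1
          rw [sDp_iter_sub]
        rw [he]
        have hcomb : (sDp k)^[l] y n' + s • ((sDp k)^[l] x n' - (sDp k)^[l] y n')
            = (1 - s) • (sDp k)^[l] y n' + s • (sDp k)^[l] x n' := by module
        rw [hcomb]
        calc ‖(1 - s) • (sDp k)^[l] y n' + s • (sDp k)^[l] x n'‖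
            ≤ ‖(1 - s) • (sDp k)^[l] y n'‖ + ‖s • (sDp k)^[l] x n'‖ := norm_add_le _ _
          _ ≤ (1 - s) * Q + s * Q := by
              apply add_le_add
              · rw [norm_smul, Real.norm_eq_abs, abs_of_nonneg (by linarith)]
                exact mul_le_mul_of_nonneg_left (hyd l h1l hlj n' hn') (by linarith)
              · rw [norm_smul, Real.norm_eq_abs, abs_of_nonneg hs0]
                exact mul_le_mul_of_nonneg_left (hxd l h1l hlj n' hn') hs0
          _ = Q := by ring
      exact sChain k j (fderiv ℝ g) hg' S hS M Q hM hQ hgb'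
        (fun i => y i + s • (x i - y i)) b hzS hzd
    exact sProd k j _ _ (2 ^ (j*j) * M * Q ^ j) ε (by positivity) hε b hAd hσ n hn
  have := intervalIntegral.norm_integral_le_of_norm_le_const
    (C := 2^j * (2 ^ (j*j) * M * Q ^ j) * ε)
    (fun s hs => hker s (by rwa [Set.uIoc_of_le zero_le_one] at hs))
  rwa [show |(1:ℝ) - 0| = 1 by norm_num, mul_one] at this

end DiffChainTool

section ConvTool

variable {Z : Type*} [NormedAddCommGroup Z] [NormedSpace ℝ Z]

theorem sDD_iter_eq (k : ℝ) : ∀ (m : ℕ) (s : ℕ → Z) (n : ℕ), m ≤ n →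
    (sDD k)^[m] s n = (sDp k)^[2*m] s (n - m) := by
  intro m
  induction m with
  | zero => intro s n _; simp
  | succ m IH =>
    intro s n hmn
    obtain ⟨n', rfl⟩ : ∃ n', n = n' + (m + 1) := ⟨n - (m+1), by omega⟩
    rw [Function.iterate_succ_apply']
    have e0 : n' + (m+1) - (m+1) = n' := by omega
    rw [e0]
    have h2 : 2*(m+1) = (2*m+1)+1 := by omega
    rw [h2, Function.iterate_succ_apply', Function.iterate_succ_apply']
    show sDp k (sDm k ((sDD k)^[m] s)) (n' + (m+1)) = _
    simp only [sDp, sDm]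
    have e1 : n' + (m+1) + 1 - 1 = n' + (m+1) := by omega
    have e2 : n' + (m+1) - 1 = n' + m := by omega
    rw [e1, e2]
    rw [IH s (n'+(m+1)+1) (by omega), IH s (n'+(m+1)) (by omega), IH s (n'+m) (by omega)]
    have e3 : n' + (m+1) + 1 - m = n' + 1 + 1 := by omega
    have e4 : n' + (m+1) - m = n' + 1 := by omega
    have e5 : n' + m - m = n' := by omega
    rw [e3, e4, e5]

theorem sDp_sDD_iter_eq (k : ℝ) (m : ℕ) (s : ℕ → Z) (n : ℕ) (hmn : m ≤ n) :
    sDp k ((sDD k)^[m] s) n = (sDp k)^[2*m+1] s (n - m) := by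
  obtain ⟨n', rfl⟩ : ∃ n', n = n' + m := ⟨n - m, by omega⟩
  have e2 : n' + m - m = n' := by omega
  rw [e2, Function.iterate_succ_apply']
  simp only [sDp]
  rw [sDD_iter_eq k m s (n'+m+1) (by omega), sDD_iter_eq k m s (n'+m) (by omega)]
  have e3 : n' + m + 1 - m = n' + 1 := by omega
  rw [e3, e2]

end ConvTool

noncomputable def uchain {X : Type} [NormedAddCommGroup X] [NormedSpace ℝ X]
    (u : ℝ → X) (T : ℝ) : ℕ → ℝ → X := fun l => iteratedDerivWithin l u (Set.Icc 0 T)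


set_option maxHeartbeats 2000000 in
/-- Lemma 2: the solution `(u^{2,n})_n` of the modified trapezoidal scheme (3.3) satisfies
the higher-order difference bounds (4.10):
`‖D(D₊D₋)^m(u^{2,n+1/2} − u(t_{n+1/2}))‖ + ‖(D₊D₋)^m(u^{2,n+1} − u(t_{n+1}))‖ ≤ C k²`
for all `m = 0, …, p` and admissible `n ≥ m`, for all steps `k = T/N ≤ k₃`.
Here `v N = (u^{2,n})_n` is the grid sequence for the step `k = T/N`, `t_n = n·k`. -/
theorem trapezoidal_DCC_bounds
    {X : Type} [NormedAddCommGroup X] [NormedSpace ℝ X] [CompleteSpace X]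
    (T : ℝ) (hT : 0 < T) (p : ℕ) (hp : 1 ≤ p)
    (F : ℝ → X → X) (μ : ℝ) (hμ : 0 < μ)
    (hFC : ContDiff ℝ (2 * p + 2) (Function.uncurry F))
    (hFLip : ∀ t x y, ‖F t x - F t y‖ ≤ μ * ‖x - y‖)
    (u : ℝ → X) (u₀ : X) (hu0 : u 0 = u₀)
    (hu : ContDiffOn ℝ (2 * p + 3) u (Set.Icc 0 T))
    (hODE : ∀ t ∈ Set.Icc 0 T, HasDerivAt u (F t (u t)) t)
    (v : ℕ → ℕ → X)
    -- the modified trapezoidal scheme (3.3)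
    (hscheme : ∀ N : ℕ, 0 < N → ∀ n : ℕ, n + 1 ≤ N →
      (T / N)⁻¹ • (v N (n + 1) - v N n)
        = F (((n : ℝ) + 1 / 2) * (T / N)) ((2 : ℝ)⁻¹ • (v N (n + 1) + v N n)))
    (hinit : ∀ N : ℕ, v N 0 = u₀)
    (C₀ : ℝ)
    -- second-order error bound (4.8)
    (herr : ∀ N : ℕ, 0 < N → ∀ n ≤ N, ‖v N n - u ((n : ℝ) * (T / N))‖ ≤ C₀ * (T / N) ^ 2) :
    ∃ k₃ : ℝ, 0 < k₃ ∧ ∃ C : ℝ, 0 < C ∧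
      ∀ N : ℕ, 0 < N → T / N ≤ k₃ →
        ∀ m : ℕ, m ≤ p → ∀ n : ℕ, m ≤ n → n + m + 1 ≤ N →
          ‖sDp (T / N) ((sDD (T / N))^[m] (fun i => v N i - u ((i : ℝ) * (T / N)))) n‖
              + ‖((sDD (T / N))^[m] (fun i => v N i - u ((i : ℝ) * (T / N)))) (n + 1)‖
            ≤ C * (T / N) ^ 2 := by
  classical
  have hC₀ : 0 ≤ C₀ := by
    have h := herr 1 one_pos 0 (by omega)
    have h0 : ‖v 1 0 - u (((0:ℕ) : ℝ) * (T / ((1:ℕ):ℝ)))‖ = 0 := by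
      simp [hinit 1, hu0]
    rw [h0] at h
    have hT1 : (0:ℝ) < (T / ((1:ℕ):ℝ))^2 := by
      simp only [Nat.cast_one, div_one]
      positivity
    nlinarith
  set w : ℕ → ℝ → X := uchain u T with hwdef
  have hUD : UniqueDiffOn ℝ (Set.Icc (0:ℝ) T) := uniqueDiffOn_Icc hT
  have hchain : ∀ l, l + 1 ≤ 2*p+3 → ∀ t ∈ Set.Icc (0:ℝ) T,
      HasDerivWithinAt (w l) (w (l+1) t) (Set.Icc 0 T) t := by
    intro l hl t ht
    have hlt : ((l:ℕ) : WithTop ℕ∞) < 2*(p:WithTop ℕ∞)+3 := by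
      have h2 : ((l:ℕ) : WithTop ℕ∞) < ((2*p+3:ℕ) : WithTop ℕ∞) := by
        exact_mod_cast (by omega : l < 2*p+3)
      refine lt_of_lt_of_le h2 (le_of_eq ?_)
      push_cast; ring
    have hdiff := (hu.differentiableOn_iteratedDerivWithin hlt hUD) t ht
    have h1 := hdiff.hasDerivWithinAt
    have h2 : iteratedDerivWithin (l+1) u (Set.Icc 0 T) t
        = derivWithin (iteratedDerivWithin l u (Set.Icc 0 T)) (Set.Icc 0 T) t :=
      by rw [iteratedDerivWithin_succ]
    show HasDerivWithinAt (iteratedDerivWithin l u (Set.Icc 0 T))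
      (iteratedDerivWithin (l+1) u (Set.Icc 0 T) t) (Set.Icc 0 T) t
    rw [h2]
    exact h1
  have hw0 : w 0 = u := by
    funext t; simp [hwdef, uchain]
  have hw1 : ∀ t ∈ Set.Icc (0:ℝ) T, w 1 t = F t (u t) := by
    intro t ht
    have h1 : HasDerivWithinAt u (F t (u t)) (Set.Icc 0 T) t := (hODE t ht).hasDerivWithinAt
    have h2 := h1.derivWithin (hUD t ht)
    show iteratedDerivWithin 1 u (Set.Icc 0 T) t = F t (u t)
    rw [iteratedDerivWithin_one]
    exact h2
  -- uniform bounds on derivatives of u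
  obtain ⟨MU, hMU1, hMUb⟩ : ∃ MU : ℝ, 1 ≤ MU ∧
      ∀ l ≤ 2*p+3, ∀ t ∈ Set.Icc (0:ℝ) T, ‖w l t‖ ≤ MU := by
    have hbdd : ∀ l : ℕ, l ≤ 2*p+3 → ∃ Ml : ℝ, ∀ t ∈ Set.Icc (0:ℝ) T, ‖w l t‖ ≤ Ml := by
      intro l hl
      have hcont : ContinuousOn (w l) (Set.Icc 0 T) := by
        apply hu.continuousOn_iteratedDerivWithin _ hUD
        have h2 : ((l:ℕ) : WithTop ℕ∞) ≤ ((2*p+3:ℕ) : WithTop ℕ∞) := by exact_mod_cast hl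
        refine le_trans h2 (le_of_eq ?_)
        push_cast; ring
      obtain ⟨t0, _, hmax⟩ := isCompact_Icc.exists_isMaxOn
        (Set.nonempty_Icc.mpr hT.le) hcont.norm
      exact ⟨‖w l t0‖, fun t ht => hmax ht⟩
    choose! Ml hMl using hbdd
    refine ⟨max 1 ((Finset.range (2*p+4)).sup' ⟨0, by simp⟩ Ml), le_max_left _ _, ?_⟩
    intro l hl t ht
    calc ‖w l t‖ ≤ Ml l := hMl l hl t ht
      _ ≤ (Finset.range (2*p+4)).sup' ⟨0, by simp⟩ Ml :=
          Finset.le_sup' Ml (by simp only [Finset.mem_range]; omega)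
      _ ≤ _ := le_max_right _ _
  -- compact tube around the solution curve and bounds on derivatives of F
  set curveP : Set (ℝ × X) := (fun t => (t, u t)) '' Set.Icc 0 T with hcurvedef
  have hcurve_cpt : IsCompact curveP :=
    isCompact_Icc.image_of_continuousOn (continuousOn_id.prodMk hu.continuousOn)
  set Khull : Set (ℝ × X) := closure (convexHull ℝ curveP) with hKdef
  have hKconv : Convex ℝ Khull := (convex_convexHull ℝ curveP).closure
  have hKcpt : IsCompact Khull := by
    have htb : TotallyBounded (convexHull ℝ curveP) :=
      (totallyBounded_convexHull (s := curveP)).mpr hcurve_cpt.totallyBounded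
    exact TotallyBounded.isCompact_of_isClosed htb.closure isClosed_closure
  have hKne : Khull.Nonempty := by
    refine ⟨(0, u 0), subset_closure (subset_convexHull ℝ _ ⟨0, ?_, rfl⟩)⟩
    exact Set.mem_Icc.mpr ⟨le_rfl, hT.le⟩
  set gb : ℝ × X → ℝ := fun z => ∑ l ∈ Finset.range (2*p+3), ‖iteratedFDeriv ℝ l (Function.uncurry F) z‖
    with hgbdef
  have hgb0 : ∀ z, 0 ≤ gb z := fun z => Finset.sum_nonneg (fun _ _ => norm_nonneg _)
  have hgbc : Continuous gb := by
    apply continuous_finset_sum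
    intro l hl
    refine (ContDiff.continuous_iteratedFDeriv ?_ hFC).norm
    simp only [Finset.mem_range] at hl
    have h2 : ((l:ℕ) : WithTop ℕ∞) ≤ ((2*p+2:ℕ) : WithTop ℕ∞) := by
      exact_mod_cast (by omega : l ≤ 2*p+2)
    refine le_trans h2 (le_of_eq ?_)
    push_cast; ring
  obtain ⟨z0, _, hzmax⟩ := hKcpt.exists_isMaxOn hKne hgbc.continuousOn
  set M : ℝ := gb z0 + 1 with hMdef
  have hM1 : 1 ≤ M := by
    have := hgb0 z0; simp only [hMdef]; linarith
  obtain ⟨δ, hδ, hthick⟩ := hKcpt.exists_thickening_subset_open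
    (isOpen_lt hgbc continuous_const : IsOpen {z : ℝ × X | gb z < M})
    (fun z hz => by
      have h1 : gb z ≤ gb z0 := hzmax hz
      simp only [Set.mem_setOf_eq, hMdef]; linarith)
  set S : Set (ℝ × X) := Metric.thickening δ Khull with hSdef
  have hSconv : Convex ℝ S := hKconv.thickening δ
  have hFb : ∀ l ≤ 2*p+2, ∀ z ∈ S, ‖iteratedFDeriv ℝ l (Function.uncurry F) z‖ ≤ M := by
    intro l hl z hz
    have h1 : gb z < M := hthick hz
    have h2 : ‖iteratedFDeriv ℝ l (Function.uncurry F) z‖ ≤ gb z := by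
      simp only [hgbdef]
      exact Finset.single_le_sum
        (f := fun l => ‖iteratedFDeriv ℝ l (Function.uncurry F) z‖)
        (fun i _ => norm_nonneg _) (by simp only [Finset.mem_range]; omega)
    linarith
  -- the step threshold
  refine ⟨min 1 (δ / (C₀ + 1)), lt_min one_pos (by positivity), ?_⟩
  -- MAIN INDUCTION
  have KEY : ∀ j : ℕ, ∃ C : ℝ, 1 ≤ C ∧ (j ≤ 2*p+1 →
      ∀ N : ℕ, 0 < N → T/(N:ℝ) ≤ min 1 (δ / (C₀ + 1)) →
      ∀ l ≤ j, ∀ n, n + l ≤ N →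
        ‖(sDp (T/(N:ℝ)))^[l] (fun i => v N i - u ((i:ℝ) * (T/(N:ℝ)))) n‖
          ≤ C * (T/(N:ℝ))^2) := by
    intro j
    induction j with
    | zero =>
      refine ⟨C₀ + 1, by linarith, ?_⟩
      intro _ N hN hk l hl n hn
      interval_cases l
      simp only [Function.iterate_zero, id_eq]
      have h := herr N hN n (by omega)
      have h2 : (0:ℝ) ≤ (T/(N:ℝ))^2 := sq_nonneg _
      nlinarith
    | succ j IHj =>
      obtain ⟨Cj, hCj1, hCjb⟩ := IHj
      by_cases hcase : j + 1 ≤ 2*p+1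
      case neg => exact ⟨Cj, hCj1, fun h => absurd h hcase⟩
      have hj2p : j ≤ 2*p := by omega
      set QC : ℝ := 1 + MU + Cj with hQCdef
      have hQC1 : 1 ≤ QC := by simp only [hQCdef]; linarith
      have hQC0 : 0 ≤ QC := by linarith
      set CB : ℝ := 2^j * (2^(j*j) * M * QC^j) with hCBdef
      have hCB0 : 0 ≤ CB := by positivity
      refine ⟨Cj + CB * (Cj + MU) + 2*MU, by nlinarith, ?_⟩
      intro _ N hN hk l hl n hn
      set k : ℝ := T/(N:ℝ) with hkdef
      have hk0 : 0 < k := div_pos hT (Nat.cast_pos.mpr hN)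
      have hk1 : k ≤ 1 := le_trans hk (min_le_left _ _)
      have hkδ : k ≤ δ / (C₀ + 1) := le_trans hk (min_le_right _ _)
      have hk21 : k^2 ≤ 1 := by nlinarith
      have hTN : (N:ℝ) * k = T := by
        rw [hkdef]; field_simp
      have hN1 : 1 ≤ N := hN
      rcases Nat.lt_or_ge l (j+1) with hlj | hlj
      · have hle := hCjb (by omega) N hN hk l (by omega) n hn
        refine le_trans hle ?_
        have h2 : (0:ℝ) ≤ (Cj + MU) := by linarith
        have : Cj ≤ Cj + CB * (Cj + MU) + 2*MU := by nlinarith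
        exact mul_le_mul_of_nonneg_right this (sq_nonneg _)
      · have hl1 : l = j + 1 := by omega
        subst hl1
        -- ===== main estimate at order j+1 =====
        set E : ℕ → X := fun i => v N i - u ((i:ℝ) * k) with hEdef
        set ms : ℕ → ℝ := fun i => (i:ℝ) * k + k / 2 with hmsdef
        set bs : ℕ → X := fun i => (2:ℝ)⁻¹ • (u ((i:ℝ)*k) + u ((i:ℝ)*k + k)) with hbsdef
        set ds : ℕ → X := fun i => (2:ℝ)⁻¹ • (E (i+1) + E i) with hdsdef
        set Xs : ℕ → ℝ × X := fun i => (ms i, bs i) with hXsdef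
        set X's : ℕ → ℝ × X := fun i => (ms i, (2:ℝ)⁻¹ • (v N (i+1) + v N i)) with hX'sdef
        set Ys : ℕ → ℝ × X := fun i => (ms i, u (ms i)) with hYsdef
        set σs : ℕ → X := fun i => w 1 (ms i) - k⁻¹ • (u ((i:ℝ)*k + k) - u ((i:ℝ)*k)) with hσsdef
        have hkT : k ≤ T := by
          have hc : (1:ℝ) ≤ (N:ℝ) := by exact_mod_cast hN1
          nlinarith [hk0.le]
        have hcast1 : ∀ i : ℕ, ((i+1 : ℕ) : ℝ) * k = (i:ℝ) * k + k := by
          intro i; push_cast; ring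
        have hgridmem : ∀ i : ℕ, i + 1 ≤ N → (0:ℝ) ≤ (i:ℝ)*k ∧ (i:ℝ)*k + k ≤ T := by
          intro i hi
          constructor
          · positivity
          · have hc : ((i:ℝ) + 1) ≤ (N:ℝ) := by exact_mod_cast hi
            nlinarith [hk0.le]
        have hEbd : ∀ i, i ≤ N → ‖E i‖ ≤ C₀ * k^2 := fun i hi => herr N hN i hi
        have hdsbd : ∀ i, i + 1 ≤ N → ‖ds i‖ ≤ C₀ * k^2 := by
          intro i hi
          have h1 := hEbd (i+1) hi
          have h2 := hEbd i (by omega)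
          have he : ‖ds i‖ ≤ (2:ℝ)⁻¹ * (‖E (i+1)‖ + ‖E i‖) := by
            rw [hdsdef]
            simp only []
            rw [norm_smul]
            rw [show ‖(2:ℝ)⁻¹‖ = 2⁻¹ by simp]
            exact mul_le_mul_of_nonneg_left (norm_add_le _ _) (by norm_num)
          linarith
        -- discrete mean value helper
        have hDMVT : ∀ (fam : ℕ → ℝ → X) (l : ℕ) (B Mb : ℝ),
            (∀ r < l, ∀ x ∈ Set.Icc (0:ℝ) B, HasDerivWithinAt (fam r) (fam (r+1) x)
              (Set.Icc 0 B) x) →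
            (∀ x ∈ Set.Icc (0:ℝ) B, ‖fam l x‖ ≤ Mb) →
            ∀ t₀, 0 ≤ t₀ → t₀ + l*k ≤ B → ‖gridD k l (fam 0) t₀‖ ≤ Mb := by
          intro fam l B Mb hch hbd t₀ h0 hl
          exact gridD_norm_le k hk0 0 B Mb l fam hch hbd t₀ ⟨h0, by linarith⟩
        have htrans : ∀ (c : ℝ), 0 ≤ c → c ≤ k → ∀ (r : ℕ), r + 1 ≤ 2*p+3 →
            ∀ x ∈ Set.Icc (0:ℝ) (T-k),
            HasDerivWithinAt (fun y => w r (y + c)) (w (r+1) (x + c)) (Set.Icc 0 (T-k)) x := by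
          intro c hc0 hck r hr x hx
          have hxc : x + c ∈ Set.Icc (0:ℝ) T := ⟨by linarith [hx.1], by linarith [hx.2]⟩
          have hmaps : Set.MapsTo (fun y : ℝ => y + c) (Set.Icc 0 (T-k)) (Set.Icc 0 T) := by
            intro y hy
            simp only [Set.mem_Icc] at hy ⊢
            constructor <;> linarith
          have hinner : HasDerivWithinAt (fun y : ℝ => y + c) 1 (Set.Icc (0:ℝ) (T-k)) x :=
            (hasDerivWithinAt_id x _).add_const c
          have h5 := (hchain r hr (x+c) hxc).scomp x hinner hmaps
          simpa [Function.comp_def] using h5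
        have hwin : ∀ (l n' : ℕ), n' + l + 1 ≤ N → (0:ℝ) + (n':ℝ)*k + (l:ℝ)*k ≤ T - k := by
          intro l n' hn'
          have hc : ((n':ℝ) + (l:ℝ) + 1) ≤ (N:ℝ) := by exact_mod_cast hn'
          nlinarith [hk0.le, mul_le_mul_of_nonneg_right hc hk0.le]
        -- grid bounds for u-compositions
        have hugrid : ∀ (c : ℝ), 0 ≤ c → c ≤ k → ∀ l ≤ 2*p+2, ∀ n' : ℕ, n' + l + 1 ≤ N →
            ‖(sDp k)^[l] (fun i => u ((i:ℝ)*k + c)) n'‖ ≤ MU := by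
          intro c hc0 hck l hl n' hn'
          have hgr := gridD_seq k l (fun y => w 0 (y + c)) 0 n'
          have hseq : (fun i : ℕ => u ((i:ℝ)*k + c))
              = fun i : ℕ => w 0 ((0:ℝ) + (i:ℝ)*k + c) := by
            funext i
            rw [hw0]
            congr 1
            ring
          rw [hseq, hgr]
          refine hDMVT (fun r y => w r (y + c)) l (T-k) MU ?_ ?_ _ (by positivity) ?_
          · intro r hr x hx
            exact htrans c hc0 hck r (by omega) x hx
          · intro x hx
            exact hMUb l (by omega) (x + c) ⟨by linarith [hx.1], by linarith [hx.2]⟩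
          · exact hwin l n' hn'
        have hbsd : ∀ l ≤ 2*p+2, ∀ n', n' + l + 1 ≤ N → ‖(sDp k)^[l] bs n'‖ ≤ MU := by
          intro l hl n' hn'
          have hb1 : bs = fun i => (2:ℝ)⁻¹ •
              ((fun i' : ℕ => u ((i':ℝ)*k + 0)) i + (fun i' : ℕ => u ((i':ℝ)*k + k)) i) := by
            funext i
            rw [hbsdef]
            norm_num
          rw [hb1, sDp_iter_smul, norm_smul]
          rw [show ‖(2:ℝ)⁻¹‖ = 2⁻¹ by simp]
          have h2 := sDp_iter_add k l (fun i' : ℕ => u ((i':ℝ)*k + 0))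
            (fun i' : ℕ => u ((i':ℝ)*k + k)) n'
          rw [h2]
          have hA := hugrid 0 le_rfl hk0.le l hl n' hn'
          have hB := hugrid k hk0.le le_rfl l hl n' hn'
          calc (2:ℝ)⁻¹ * ‖_ + _‖ ≤ 2⁻¹ * (MU + MU) := by
                apply mul_le_mul_of_nonneg_left _ (by norm_num)
                exact le_trans (norm_add_le _ _) (add_le_add hA hB)
            _ = MU := by ring
        have hygd : ∀ l ≤ 2*p+2, ∀ n', n' + l + 1 ≤ N →
            ‖(sDp k)^[l] (fun i => u (ms i)) n'‖ ≤ MU := by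
          intro l hl n' hn'
          have h1 : (fun i : ℕ => u (ms i)) = fun i : ℕ => u ((i:ℝ)*k + k/2) := by
            funext i; rw [hmsdef]
          rw [h1]
          exact hugrid (k/2) (by linarith) (by linarith) l hl n' hn'
        have hmsd : ∀ l, 1 ≤ l → ∀ n', ‖(sDp k)^[l] ms n'‖ ≤ 1 := by
          intro l h1l n'
          obtain ⟨l', rfl⟩ : ∃ l'', l = l'' + 1 := ⟨l - 1, by omega⟩
          rw [Function.iterate_succ_apply]
          have hms1 : sDp k ms = fun _ : ℕ => (1:ℝ) := by
            funext i
            rw [hmsdef]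
            simp only [sDp, smul_eq_mul]
            have he : ((i+1:ℕ):ℝ) * k + k/2 - ((i:ℝ)*k + k/2) = k := by push_cast; ring
            rw [he]
            field_simp
          rw [hms1]
          cases l' with
          | zero => simp
          | succ l'' =>
            rw [sDp_iter_const k (l''+1) (by omega)]
            simp
        -- memberships
        have hXsK : ∀ i, i + 1 ≤ N → Xs i ∈ Khull := by
          intro i hi
          obtain ⟨hg0, hgT⟩ := hgridmem i hi
          have ha : (((i:ℝ)*k, u ((i:ℝ)*k)) : ℝ × X) ∈ curveP :=
            ⟨(i:ℝ)*k, ⟨hg0, by linarith [hk0.le]⟩, rfl⟩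
          have hb : (((i:ℝ)*k + k, u ((i:ℝ)*k + k)) : ℝ × X) ∈ curveP :=
            ⟨(i:ℝ)*k + k, ⟨by linarith [hk0.le], hgT⟩, rfl⟩
          have hmid := (convex_convexHull ℝ curveP) (subset_convexHull ℝ _ ha)
            (subset_convexHull ℝ _ hb)
            (by norm_num : (0:ℝ) ≤ 2⁻¹) (by norm_num : (0:ℝ) ≤ 2⁻¹) (by norm_num)
          have heq : (2⁻¹:ℝ) • ((((i:ℝ)*k, u ((i:ℝ)*k))) : ℝ × X)
              + (2⁻¹:ℝ) • ((((i:ℝ)*k + k, u ((i:ℝ)*k + k))) : ℝ × X) = Xs i := by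
            rw [hXsdef]
            simp only [hmsdef, hbsdef, Prod.smul_mk, Prod.mk_add_mk, smul_eq_mul]
            rw [Prod.mk.injEq]
            constructor
            · ring
            · rw [smul_add]
          rw [heq] at hmid
          exact subset_closure hmid
        have hXsS : ∀ i, i + 1 ≤ N → Xs i ∈ S :=
          fun i hi => Metric.self_subset_thickening hδ _ (hXsK i hi)
        have hYsS : ∀ i, i + 1 ≤ N → Ys i ∈ S := by
          intro i hi
          obtain ⟨hg0, hgT⟩ := hgridmem i hi
          refine Metric.self_subset_thickening hδ _
            (subset_closure (subset_convexHull ℝ _ ?_))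
          refine ⟨ms i, ?_, by rw [hYsdef]⟩
          simp only [hmsdef]
          exact ⟨by linarith [hk0.le], by linarith⟩
        have hX'decomp : ∀ i, X's i = Xs i + (((0:ℝ), ds i) : ℝ × X) := by
          intro i
          have h2 : (2:ℝ)⁻¹ • (v N (i+1) + v N i) = bs i + ds i := by
            rw [hbsdef, hdsdef, hEdef]
            simp only []
            rw [hcast1 i]
            module
          show ((ms i, (2:ℝ)⁻¹ • (v N (i+1) + v N i)) : ℝ × X) = (ms i, bs i) + ((0:ℝ), ds i)
          rw [Prod.mk_add_mk, add_zero]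
          exact congrArg (Prod.mk (ms i)) h2
        have hdistX' : ∀ i, i + 1 ≤ N → dist (X's i) (Xs i) < δ := by
          intro i hi
          rw [dist_eq_norm]
          have hsub : X's i - Xs i = (((0:ℝ), ds i) : ℝ × X) := by
            rw [hX'decomp i]
            abel
          rw [hsub, Prod.norm_def]
          simp only [norm_zero]
          rw [max_eq_right (norm_nonneg _)]
          have h1 := hdsbd i hi
          have h2 : C₀ * k^2 < δ := by
            have h3 : C₀ * k ≤ C₀ * (δ / (C₀ + 1)) := mul_le_mul_of_nonneg_left hkδ hC₀
            have h4 : C₀ * (δ / (C₀ + 1)) < δ := by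
              rw [show C₀ * (δ / (C₀+1)) = C₀ * δ / (C₀+1) by ring,
                div_lt_iff₀ (by positivity : (0:ℝ) < C₀+1)]
              nlinarith
            nlinarith [hk0.le]
          linarith
        have hX'sS : ∀ i, i + 1 ≤ N → X's i ∈ S := by
          intro i hi
          rw [hSdef, Metric.mem_thickening_iff]
          exact ⟨Xs i, hXsK i hi, hdistX' i hi⟩
        -- the scheme identity
        have hID : ∀ i, i + 1 ≤ N → sDp k E i
            = (Function.uncurry F (X's i) - Function.uncurry F (Xs i))
              + ((Function.uncurry F (Xs i) - Function.uncurry F (Ys i)) + σs i) := by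
          intro i hi
          have hs := hscheme N hN i hi
          have hms : ((i:ℝ) + 1/2) * k = ms i := by rw [hmsdef]; ring
          rw [hms] at hs
          obtain ⟨hg0, hgT⟩ := hgridmem i hi
          have hmmem : ms i ∈ Set.Icc (0:ℝ) T := by
            simp only [hmsdef]
            exact ⟨by linarith [hk0.le], by linarith⟩
          have hYw : Function.uncurry F (Ys i) = w 1 (ms i) := by
            show Function.uncurry F (ms i, u (ms i)) = w 1 (ms i)
            rw [Function.uncurry_apply_pair]
            exact (hw1 (ms i) hmmem).symm
          have hX'w : Function.uncurry F (X's i)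
              = F (ms i) ((2:ℝ)⁻¹ • (v N (i+1) + v N i)) := by
            show Function.uncurry F (ms i, (2:ℝ)⁻¹ • (v N (i+1) + v N i)) = _
            rw [Function.uncurry_apply_pair]
          have hEexp : sDp k E i
              = k⁻¹ • (v N (i+1) - v N i) - k⁻¹ • (u ((i:ℝ)*k + k) - u ((i:ℝ)*k)) := by
            show k⁻¹ • (E (i+1) - E i) = _
            rw [hEdef]
            simp only []
            rw [hcast1 i]
            module
          rw [hEexp, hs, ← hX'w, hYw, hσsdef]
          simp only []
          abel
        -- difference bounds for the coordinate sequences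
        have hdsd : ∀ l ≤ j, ∀ n', n' + l + 1 ≤ N → ‖(sDp k)^[l] ds n'‖ ≤ Cj * k^2 := by
          intro l hl n' hn'
          have he : (sDp k)^[l] ds n'
              = (2:ℝ)⁻¹ • ((sDp k)^[l] E (n'+1) + (sDp k)^[l] E n') := by
            rw [show ds = fun i => (2:ℝ)⁻¹ • ((fun i' => E (i'+1)) i + E i) from
              funext fun i => by rw [hdsdef]]
            rw [sDp_iter_smul]
            congr 1
            rw [sDp_iter_add]
            congr 1
            have h6 := sDp_iter_shift k l E 1 n'
            simpa using h6
          have h1 : ‖(sDp k)^[l] E (n'+1)‖ ≤ Cj * k^2 :=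
            hCjb (by omega) N hN hk l (by omega) (n'+1) (by omega)
          have h2 : ‖(sDp k)^[l] E n'‖ ≤ Cj * k^2 :=
            hCjb (by omega) N hN hk l (by omega) n' (by omega)
          rw [he, norm_smul]
          rw [show ‖(2:ℝ)⁻¹‖ = 2⁻¹ by simp]
          calc (2:ℝ)⁻¹ * ‖_ + _‖ ≤ 2⁻¹ * (Cj * k^2 + Cj * k^2) := by
                apply mul_le_mul_of_nonneg_left _ (by norm_num)
                exact le_trans (norm_add_le _ _) (add_le_add h1 h2)
            _ = Cj * k^2 := by ring
        have hXd0 : ∀ l, 1 ≤ l → l ≤ 2*p+2 → ∀ n', n' + l + 1 ≤ N →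
            ‖(sDp k)^[l] Xs n'‖ ≤ 1 + MU := by
          intro l h1 h2 n' hn'
          have hXseq : (sDp k)^[l] Xs n' = ((sDp k)^[l] ms n', (sDp k)^[l] bs n') := by
            rw [show Xs = (fun i => ((ms i, bs i) : ℝ × X)) from funext fun i => by rw [hXsdef]]
            exact sDp_iter_prod k l ms bs n'
          rw [hXseq, Prod.norm_def]
          apply max_le
          · exact le_trans (hmsd l h1 n') (by linarith)
          · exact le_trans (hbsd l h2 n' hn') (by linarith)
        have hXd : ∀ l, 1 ≤ l → l ≤ j → ∀ n', n' + l ≤ N - 1 →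
            ‖(sDp k)^[l] Xs n'‖ ≤ QC := by
          intro l h1 h2 n' hn'
          refine le_trans (hXd0 l h1 (by omega) n' (by omega)) ?_
          rw [hQCdef]; linarith
        have hYd : ∀ l, 1 ≤ l → l ≤ j → ∀ n', n' + l ≤ N - 1 →
            ‖(sDp k)^[l] Ys n'‖ ≤ QC := by
          intro l h1 h2 n' hn'
          have hYseq : (sDp k)^[l] Ys n' = ((sDp k)^[l] ms n', (sDp k)^[l] (fun i => u (ms i)) n') := by
            rw [show Ys = (fun i => ((ms i, u (ms i)) : ℝ × X)) from funext fun i => by rw [hYsdef]]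
            exact sDp_iter_prod k l ms _ n'
          rw [hYseq, Prod.norm_def]
          apply max_le
          · refine le_trans (hmsd l h1 n') ?_
            rw [hQCdef]; linarith
          · refine le_trans (hygd l (by omega) n' (by omega)) ?_
            rw [hQCdef]; linarith
        have hX'd : ∀ l, 1 ≤ l → l ≤ j → ∀ n', n' + l ≤ N - 1 →
            ‖(sDp k)^[l] X's n'‖ ≤ QC := by
          intro l h1 h2 n' hn'
          have he : (sDp k)^[l] X's n'
              = (sDp k)^[l] Xs n' + (sDp k)^[l] (fun i => (((0:ℝ), ds i) : ℝ × X)) n' := by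
            rw [show X's = fun i => Xs i + (((0:ℝ), ds i) : ℝ × X) from funext hX'decomp]
            exact sDp_iter_add k l _ _ n'
          have hz : ‖(sDp k)^[l] (fun i => (((0:ℝ), ds i) : ℝ × X)) n'‖
              = ‖(sDp k)^[l] ds n'‖ := by
            rw [show (fun i => (((0:ℝ), ds i) : ℝ × X))
                = fun i => (((fun _ : ℕ => (0:ℝ)) i, ds i) : ℝ × X) from rfl]
            rw [sDp_iter_prod, Prod.norm_def, sDp_iter_zero_seq, norm_zero,
              max_eq_right (norm_nonneg _)]
          have hdb := hdsd l (by omega) n' (by omega)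
          have hCjk : Cj * k^2 ≤ Cj := by nlinarith
          calc ‖(sDp k)^[l] X's n'‖
              ≤ ‖(sDp k)^[l] Xs n'‖ + ‖(sDp k)^[l] (fun i => (((0:ℝ), ds i) : ℝ × X)) n'‖ := by
                rw [he]; exact norm_add_le _ _
            _ ≤ (1 + MU) + Cj := by
                apply add_le_add (hXd0 l h1 (by omega) n' (by omega))
                rw [hz]; linarith
            _ = QC := by rw [hQCdef]
        have hσ1 : ∀ l ≤ j, ∀ n', n' + l ≤ N - 1 →
            ‖(sDp k)^[l] (fun i => X's i - Xs i) n'‖ ≤ Cj * k^2 := by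
          intro l hl n' hn'
          have he : (fun i => X's i - Xs i)
              = fun i => (((fun _ : ℕ => (0:ℝ)) i, ds i) : ℝ × X) := by
            funext i
            rw [hX'decomp i]
            abel
          rw [he, sDp_iter_prod, Prod.norm_def, sDp_iter_zero_seq, norm_zero,
            max_eq_right (norm_nonneg _)]
          exact hdsd l hl n' (by omega)
        have hσ2 : ∀ l ≤ j, ∀ n', n' + l ≤ N - 1 →
            ‖(sDp k)^[l] (fun i => Xs i - Ys i) n'‖ ≤ MU * k^2 := by
          intro l hl n' hn'
          have he : (fun i => Xs i - Ys i)
              = fun i => (((fun _ : ℕ => (0:ℝ)) i, (fun i' => bs i' - u (ms i')) i) : ℝ × X) := by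
            funext i
            show Xs i - Ys i = ((0:ℝ), bs i - u (ms i))
            rw [hXsdef, hYsdef]
            simp only []
            rw [Prod.mk_sub_mk, sub_self]
          rw [he, sDp_iter_prod, Prod.norm_def, sDp_iter_zero_seq, norm_zero,
            max_eq_right (norm_nonneg _)]
          have hgr := gridD_seq k l
            (fun y => (2:ℝ)⁻¹ • (w 0 (y + 0) + w 0 (y + k)) - w 0 (y + k/2)) 0 n'
          have hseq : (fun i' : ℕ => bs i' - u (ms i'))
              = fun i : ℕ => (2:ℝ)⁻¹ • (w 0 ((0:ℝ) + (i:ℝ)*k + 0) + w 0 ((0:ℝ) + (i:ℝ)*k + k))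
                - w 0 ((0:ℝ) + (i:ℝ)*k + k/2) := by
            funext i
            rw [hbsdef, hmsdef, hw0]
            simp only [zero_add, add_zero]
          rw [hseq, hgr]
          refine hDMVT (fun r y => (2:ℝ)⁻¹ • (w r (y+0) + w r (y+k)) - w r (y+k/2)) l (T-k)
            (MU * k^2) ?_ ?_ _ (by positivity) (hwin l n' (by omega))
          · intro r hr x hx
            exact (((htrans 0 le_rfl hk0.le r (by omega) x hx).add
              (htrans k hk0.le le_rfl r (by omega) x hx)).const_smul ((2:ℝ)⁻¹)).sub
              (htrans (k/2) (by linarith) (by linarith) r (by omega) x hx)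
          · intro x hx
            simp only [add_zero]
            exact avg_est (Set.Icc 0 T) (convex_Icc _ _) (w l) (w (l+1)) (w (l+2))
              (fun y hy => hchain l (by omega) y hy)
              (fun y hy => hchain (l+1) (by omega) y hy)
              MU (fun y hy => hMUb (l+2) (by omega) y hy) x k hk0
              ⟨hx.1, by linarith [hx.2]⟩ ⟨by linarith [hx.1, hk0.le], by linarith [hx.2]⟩
        have hb3 : ‖(sDp k)^[j] σs n‖ ≤ 2*MU*k^2 := by
          have hgr := gridD_seq k j
            (fun y => w 1 (y + k/2) - k⁻¹ • (w 0 (y+k) - w 0 (y+0))) 0 n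
          have hseq : σs = fun i : ℕ =>
              w 1 ((0:ℝ) + (i:ℝ)*k + k/2) - k⁻¹ • (w 0 ((0:ℝ) + (i:ℝ)*k + k)
                - w 0 ((0:ℝ) + (i:ℝ)*k + 0)) := by
            funext i
            rw [hσsdef, hmsdef, hw0]
            simp only [zero_add, add_zero]
          rw [hseq, hgr]
          refine hDMVT (fun r y => w (r+1) (y + k/2) - k⁻¹ • (w r (y+k) - w r (y+0))) j (T-k)
            (2*MU*k^2) ?_ ?_ _ (by positivity) (hwin j n (by omega))
          · intro r hr x hx
            exact (htrans (k/2) (by linarith) (by linarith) (r+1) (by omega) x hx).sub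
              (((htrans k hk0.le le_rfl r (by omega) x hx).sub
                (htrans 0 le_rfl hk0.le r (by omega) x hx)).const_smul k⁻¹)
          · intro x hx
            simp only [add_zero]
            exact mid_est (Set.Icc 0 T) (convex_Icc _ _) (w j) (w (j+1)) (w (j+2)) (w (j+3))
              (fun y hy => hchain j (by omega) y hy)
              (fun y hy => hchain (j+1) (by omega) y hy)
              (fun y hy => hchain (j+2) (by omega) y hy)
              MU (fun y hy => hMUb (j+3) (by omega) y hy) x k hk0
              ⟨hx.1, by linarith [hx.2]⟩ ⟨by linarith [hx.1, hk0.le], by linarith [hx.2]⟩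
        -- the two composition difference bounds
        have hFj : ContDiff ℝ ((j+1 : ℕ) : WithTop ℕ∞) (Function.uncurry F) := by
          refine hFC.of_le ?_
          have h2 : ((j+1:ℕ) : WithTop ℕ∞) ≤ ((2*p+2:ℕ) : WithTop ℕ∞) := by
            exact_mod_cast (by omega : j+1 ≤ 2*p+2)
          refine le_trans h2 (le_of_eq ?_)
          push_cast; ring
        have hb1 : ‖(sDp k)^[j]
            (fun i => Function.uncurry F (X's i) - Function.uncurry F (Xs i)) n‖
            ≤ CB * (Cj * k^2) := by
          have h := sDiffChain k j (Function.uncurry F) hFj S hSconv M QC (Cj * k^2)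
            hM1 hQC1 (by positivity)
            (fun l hl z hz => hFb l (by omega) z hz) X's Xs (N-1)
            (fun i hi => hX'sS i (by omega)) (fun i hi => hXsS i (by omega))
            hX'd hXd hσ1 n (by omega)
          refine le_trans h (le_of_eq ?_)
          rw [hCBdef]
        have hb2 : ‖(sDp k)^[j]
            (fun i => Function.uncurry F (Xs i) - Function.uncurry F (Ys i)) n‖
            ≤ CB * (MU * k^2) := by
          have h := sDiffChain k j (Function.uncurry F) hFj S hSconv M QC (MU * k^2)
            hM1 hQC1 (by positivity)
            (fun l hl z hz => hFb l (by omega) z hz) Xs Ys (N-1)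
            (fun i hi => hXsS i (by omega)) (fun i hi => hYsS i (by omega))
            hXd hYd hσ2 n (by omega)
          refine le_trans h (le_of_eq ?_)
          rw [hCBdef]
        -- assemble
        rw [Function.iterate_succ_apply]
        have hcongr := sDp_iter_congr k j (sDp k E)
          (fun i => (Function.uncurry F (X's i) - Function.uncurry F (Xs i))
            + ((Function.uncurry F (Xs i) - Function.uncurry F (Ys i)) + σs i)) n
          (fun i hi1 hi2 => hID i (by omega))
        rw [hcongr]
        rw [sDp_iter_add k j, sDp_iter_add k j]
        refine le_trans (norm_add_le _ _) ?_
        refine le_trans (add_le_add le_rfl (norm_add_le _ _)) ?_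
        refine le_trans (add_le_add hb1 (add_le_add hb2 hb3)) ?_
        have hCjnn : (0:ℝ) ≤ Cj := by linarith
        nlinarith [mul_nonneg hCjnn (sq_nonneg k)]

  obtain ⟨C, hC1, hCb⟩ := KEY (2*p+1)
  refine ⟨2*C, by linarith, ?_⟩
  intro N hN hk m hm n hnm hnN
  have h1 := sDp_sDD_iter_eq (T/(N:ℝ)) m (fun i => v N i - u ((i:ℝ) * (T/(N:ℝ)))) n hnm
  have h2 := sDD_iter_eq (T/(N:ℝ)) m (fun i => v N i - u ((i:ℝ) * (T/(N:ℝ)))) (n+1) (by omega)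
  rw [h1, h2]
  have b1 := hCb le_rfl N hN hk (2*m+1) (by omega) (n - m) (by omega)
  have b2 := hCb le_rfl N hN hk (2*m) (by omega) (n + 1 - m) (by omega)
  calc _ ≤ C * (T/(N:ℝ))^2 + C * (T/(N:ℝ))^2 := add_le_add b1 b2
    _ = 2*C * (T/(N:ℝ))^2 := by ring
end

section
/- Let k > 0, λ ∈ ℂ with Re(λ) < 0, and set r = (2 + λk)/(2 − λk). Let c₂, c₃, c₄, … be arbitrary real coefficients and, for each j ≥ 0, let (u^{2j+2,n})_n be the deferred correction solutions for the test problem u' = λu, u(0) = 1, i.e. u^{2,n} = r^n and for n ≥ j: u^{2j+2,n+1} = r·u^{2j+2,n} + (2/(2 − λk))·( k·Σ_{i=1}^{j} c_{2i+1} k^{2i} D₋(D₊D₋)^i u^{2j,n+1} − λk·Σ_{i=1}^{j} c_{2i} k^{2i} (D₊D₋)^i ((u^{2j,n+1} + u^{2j,n})/2) ), where the difference operators act on (u^{2j,n}) with step k. Then for every j ≥ 0, lim_{n→∞} |u^{2j+2,n}| = 0; that is, each deferred correction scheme DC(2j+2) is A-stable. -/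
open Filter

lemma t_sDp {k : ℝ} {s : ℕ → ℂ} (h : Tendsto s atTop (nhds 0)) :
    Tendsto (sDp k s) atTop (nhds 0) := by
  have h1 : Tendsto (fun n => s (n + 1) - s n) atTop (nhds 0) := by
    simpa using (h.comp (tendsto_add_atTop_nat 1)).sub h
  have h2 := h1.const_smul (k⁻¹ : ℝ)
  rw [smul_zero] at h2
  exact h2

lemma t_sDm {k : ℝ} {s : ℕ → ℂ} (h : Tendsto s atTop (nhds 0)) :
    Tendsto (sDm k s) atTop (nhds 0) := by
  have h1 : Tendsto (fun n : ℕ => s n - s (n - 1)) atTop (nhds 0) := by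
    simpa using h.sub (h.comp (tendsto_sub_atTop_nat 1))
  have h2 := h1.const_smul (k⁻¹ : ℝ)
  rw [smul_zero] at h2
  exact h2

lemma t_sDD_iter {k : ℝ} (i : ℕ) : ∀ {s : ℕ → ℂ}, Tendsto s atTop (nhds 0) →
    Tendsto ((sDD k)^[i] s) atTop (nhds 0) := by
  induction i with
  | zero => intro s h; simpa using h
  | succ i ih =>
    intro s h
    rw [Function.iterate_succ_apply]
    exact ih (t_sDp (t_sDm h))

lemma key (r : ℂ) (hr : ‖r‖ < 1) (g u : ℕ → ℂ) (N : ℕ)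
    (hg : Tendsto g atTop (nhds 0))
    (hu : ∀ n, N ≤ n → u (n + 1) = r * u n + g n) :
    Tendsto u atTop (nhds 0) := by
  have hr0 : (0:ℝ) ≤ ‖r‖ := norm_nonneg r
  rw [Metric.tendsto_atTop]
  intro ε hε
  have h1r : 0 < 1 - ‖r‖ := by linarith
  have hδ : 0 < ε * (1 - ‖r‖) / 2 := by positivity
  obtain ⟨M₁, hM₁⟩ := (Metric.tendsto_atTop.mp hg) (ε * (1 - ‖r‖) / 2) hδ
  set M := max N M₁ with hM
  have claim : ∀ m, ‖u (M + m)‖ ≤ ‖r‖ ^ m * ‖u M‖ + ε / 2 := by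
    intro m
    induction m with
    | zero => simp; linarith
    | succ m ih =>
      have hN : N ≤ M + m := le_trans (le_max_left _ _) (Nat.le_add_right _ _)
      have hg' : ‖g (M + m)‖ < ε * (1 - ‖r‖) / 2 := by
        have := hM₁ (M + m) (le_trans (le_max_right _ _) (Nat.le_add_right _ _))
        simpa [dist_eq_norm] using this
      have := hu (M + m) hN
      calc ‖u (M + (m+1))‖ = ‖r * u (M + m) + g (M + m)‖ := by
            rw [show M + (m+1) = (M + m) + 1 by ring, this]
        _ ≤ ‖r‖ * ‖u (M + m)‖ + ‖g (M + m)‖ := by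
            refine le_trans (norm_add_le _ _) ?_
            simp [norm_mul]
        _ ≤ ‖r‖ * (‖r‖ ^ m * ‖u M‖ + ε / 2) + ε * (1 - ‖r‖) / 2 := by
            have := mul_le_mul_of_nonneg_left ih hr0
            nlinarith
        _ ≤ ‖r‖ ^ (m+1) * ‖u M‖ + ε / 2 := by
            rw [pow_succ]
            nlinarith
  have hpow : Tendsto (fun m => ‖r‖ ^ m * ‖u M‖) atTop (nhds 0) := by
    simpa using (tendsto_pow_atTop_nhds_zero_of_norm_lt_one (by simpa using hr)).mul_const ‖u M‖
  obtain ⟨m₀, hm₀⟩ := (Metric.tendsto_atTop.mp hpow) (ε / 2) (by positivity)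
  refine ⟨M + m₀, fun n hn => ?_⟩
  have h1 : M + (n - M) = n := by omega
  have h2 : m₀ ≤ n - M := by omega
  have hc := claim (n - M)
  rw [h1] at hc
  have h3 := hm₀ (n - M) h2
  rw [dist_eq_norm, sub_zero, Real.norm_eq_abs, abs_of_nonneg (by positivity)] at h3
  rw [dist_eq_norm, sub_zero]
  linarith


/-- Theorem 6 (A-stability): for the test problem `u' = λu`, `u(0) = 1`, with fixed `k > 0`
and `Re(λ) < 0`, every deferred correction solution `(u^{2j+2,n})_n` satisfies
`|u^{2j+2,n}| → 0` as `n → ∞`; that is, each scheme DC(2j+2) is A-stable. Here `U j` denotes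
the sequence `(u^{2j+2,n})_n`; `U 0` is the modified trapezoidal (Crank–Nicolson) solution
`r^n` with `r = (2+λk)/(2−λk)`, and `U (j+1)` is any sequence satisfying the DC recurrence
(6.5) built from `U j`. -/
theorem DC_A_stable (k : ℝ) (hk : 0 < k) (lam : ℂ) (hlam : lam.re < 0)
    (c : ℕ → ℝ) (U : ℕ → ℕ → ℂ)
    (hU0 : ∀ n : ℕ, U 0 n = ((2 + lam * k) / (2 - lam * k)) ^ n)
    (hrec : ∀ j : ℕ, ∀ n : ℕ, j + 1 ≤ n →
      U (j + 1) (n + 1) =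
        ((2 + lam * k) / (2 - lam * k)) * U (j + 1) n +
          (2 / (2 - lam * k)) *
            ((k : ℂ) *
                ∑ i ∈ Finset.Icc 1 (j + 1),
                  ((c (2 * i + 1) : ℂ) * (k : ℂ) ^ (2 * i)) *
                    sDm k ((sDD k)^[i] (U j)) (n + 1)
              - lam * (k : ℂ) *
                ∑ i ∈ Finset.Icc 1 (j + 1),
                  ((c (2 * i) : ℂ) * (k : ℂ) ^ (2 * i)) *
                    ((sDD k)^[i] (fun m => (U j (m + 1) + U j m) / 2)) n)) :
    ∀ j : ℕ, Filter.Tendsto (fun n : ℕ => ‖U j n‖) Filter.atTop (nhds 0) := by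
  set r : ℂ := (2 + lam * k) / (2 - lam * k) with hrdef
  have hden : (2 - lam * k) ≠ 0 := by
    intro h
    have := congrArg Complex.re h
    simp [Complex.sub_re, Complex.mul_re] at this
    nlinarith
  have hr : ‖r‖ < 1 := by
    rw [hrdef, norm_div, div_lt_one (norm_pos_iff.mpr hden)]
    have h1 : Complex.normSq (2 + lam * k) < Complex.normSq (2 - lam * k) := by
      simp only [Complex.normSq_apply, Complex.add_re, Complex.add_im, Complex.sub_re,
        Complex.sub_im, Complex.mul_re, Complex.mul_im, Complex.ofReal_re, Complex.ofReal_im,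
        Complex.re_ofNat, Complex.im_ofNat]
      nlinarith
    rw [← Complex.sq_norm, ← Complex.sq_norm] at h1
    have h2 : ‖2 + lam * k‖ < ‖2 - lam * k‖ :=
      lt_of_pow_lt_pow_left₀ 2 (norm_nonneg _) h1
    simpa using h2
  have main : ∀ j, Filter.Tendsto (U j) Filter.atTop (nhds 0) := by
    intro j
    induction j with
    | zero =>
      have : U 0 = fun n => r ^ n := funext hU0
      rw [this]
      exact tendsto_pow_atTop_nhds_zero_of_norm_lt_one hr
    | succ j ih =>
      set g : ℕ → ℂ := fun n =>
        (2 / (2 - lam * k)) *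
            ((k : ℂ) *
                ∑ i ∈ Finset.Icc 1 (j + 1),
                  ((c (2 * i + 1) : ℂ) * (k : ℂ) ^ (2 * i)) *
                    sDm k ((sDD k)^[i] (U j)) (n + 1)
              - lam * (k : ℂ) *
                ∑ i ∈ Finset.Icc 1 (j + 1),
                  ((c (2 * i) : ℂ) * (k : ℂ) ^ (2 * i)) *
                    ((sDD k)^[i] (fun m => (U j (m + 1) + U j m) / 2)) n) with hg
      have hgt : Filter.Tendsto g Filter.atTop (nhds 0) := by
        have havg : Filter.Tendsto (fun m => (U j (m + 1) + U j m) / 2)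
            Filter.atTop (nhds 0) := by
          have := ((ih.comp (Filter.tendsto_add_atTop_nat 1)).add ih).div_const (2 : ℂ)
          simpa using this
        have hs1 : Filter.Tendsto (fun n =>
            ∑ i ∈ Finset.Icc 1 (j + 1),
              ((c (2 * i + 1) : ℂ) * (k : ℂ) ^ (2 * i)) *
                sDm k ((sDD k)^[i] (U j)) (n + 1)) Filter.atTop (nhds 0) := by
          have : Filter.Tendsto (fun n =>
              ∑ i ∈ Finset.Icc 1 (j + 1),
                ((c (2 * i + 1) : ℂ) * (k : ℂ) ^ (2 * i)) *
                  sDm k ((sDD k)^[i] (U j)) n) Filter.atTop (nhds 0) := by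
            have h0 : (0 : ℂ) = ∑ i ∈ Finset.Icc 1 (j + 1), (0 : ℂ) := by simp
            rw [h0]
            refine tendsto_finset_sum _ fun i _ => ?_
            simpa using (t_sDm (t_sDD_iter i ih)).const_mul _
          exact this.comp (Filter.tendsto_add_atTop_nat 1)
        have hs2 : Filter.Tendsto (fun n =>
            ∑ i ∈ Finset.Icc 1 (j + 1),
              ((c (2 * i) : ℂ) * (k : ℂ) ^ (2 * i)) *
                ((sDD k)^[i] (fun m => (U j (m + 1) + U j m) / 2)) n)
            Filter.atTop (nhds 0) := by
          have h0 : (0 : ℂ) = ∑ i ∈ Finset.Icc 1 (j + 1), (0 : ℂ) := by simp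
          rw [h0]
          refine tendsto_finset_sum _ fun i _ => ?_
          simpa using (t_sDD_iter i havg).const_mul _
        have := ((hs1.const_mul (k : ℂ)).sub (hs2.const_mul (lam * k))).const_mul
          (2 / (2 - lam * k))
        simpa [hg] using this
      exact key r hr g (U (j + 1)) (j + 1) hgt (fun n hn => hrec j n hn)
  intro j
  have := (main j).norm
  simpa using this
end
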